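/- arXiv:0709.0821 — 3 statements merged into one kernel-verified Lean document; each statement's English description precedes it below -/
import Mathlib

section
/- Let G = (V, E) be a simple graph with countable vertex set V in which every vertex has at most D neighbours (D ∈ ℕ), and let Δ_G be the graph Laplacian on ℓ²(V). Then zero is an eigenvalue of Δ_G (i.e. there exists a nonzero φ ∈ ℓ²(V) with Δ_G φ = 0) if and only if G possesses a finite connected component. -/
noncomputable section

/-- Let `G = (V, E)` be a simple graph with countable vertex set in which every
vertex has at most `D` neighbours, and let `Δ` be the graph Laplacian on `ℓ²(V)`. Then zero is
an eigenvalue of `Δ` (i.e. there is a nonzero `φ ∈ ℓ²(V)` with `Δ φ = 0`) if and only if `G`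
possesses a finite connected component. -/
theorem graph_laplacian_zero_eigenvalue_iff_finite_component
    {V : Type*} [Countable V] (G : SimpleGraph V) (D : ℕ)
    (hdeg : ∀ v : V, (G.neighborSet v).Finite ∧ (G.neighborSet v).ncard ≤ D)
    (Δ : lp (fun _ : V => ℂ) 2 →L[ℂ] lp (fun _ : V => ℂ) 2)
    (hΔ : ∀ (φ : lp (fun _ : V => ℂ) 2) (v : V),
      Δ φ v = ∑' w : G.neighborSet v, (φ v - φ (w : V))) :
    (∃ φ : lp (fun _ : V => ℂ) 2, φ ≠ 0 ∧ Δ φ = 0) ↔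
      ∃ c : G.ConnectedComponent, c.supp.Finite := by
  classical
  constructor
  · rintro ⟨φ, hφ0, hΔφ⟩
    have hzero : ∀ v : V, ∑' w : G.neighborSet v,
        ((φ : ∀ _ : V, ℂ) v - φ (w : V)) = 0 := by
      intro v
      rw [← hΔ φ v, hΔφ]
      simp
    have hsum : Summable (fun v : V => ‖(φ : ∀ _ : V, ℂ) v‖ ^ (2 : ℝ)) := by
      have h2 : (0 : ℝ) < (2 : ENNReal).toReal := by norm_num
      have := (lp.memℓp φ).summable h2
      simpa using this
    -- the set of vertices with large value is finite
    have hfin : ∀ ε : ℝ, 0 < ε → {v : V | ε ≤ ‖(φ : ∀ _ : V, ℂ) v‖}.Finite := by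
      intro ε hε
      have h1 : ∀ᶠ v in Filter.cofinite,
          ‖(φ : ∀ _ : V, ℂ) v‖ ^ (2 : ℝ) < ε ^ (2 : ℝ) :=
        hsum.tendsto_cofinite_zero.eventually_lt_const
          (by positivity)
      have h2 := Filter.eventually_cofinite.mp h1
      refine h2.subset ?_
      intro v hv
      simp only [Set.mem_setOf_eq] at hv ⊢
      intro hlt
      exact absurd (Real.rpow_le_rpow hε.le hv (by norm_num)) (not_le.mpr hlt)
    -- a vertex where `φ` is nonzero
    obtain ⟨u, hu⟩ : ∃ u : V, (φ : ∀ _ : V, ℂ) u ≠ 0 := by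
      by_contra h
      push_neg at h
      exact hφ0 (lp.ext (funext fun v => by simpa using h v))
    have hεu : (0 : ℝ) < ‖(φ : ∀ _ : V, ℂ) u‖ := norm_pos_iff.mpr hu
    -- a global maximum of `‖φ‖`
    obtain ⟨v0, hv0S, hv0max⟩ :=
      Set.exists_max_image {v : V | ‖(φ : ∀ _ : V, ℂ) u‖ ≤ ‖(φ : ∀ _ : V, ℂ) v‖}
        (fun v => ‖(φ : ∀ _ : V, ℂ) v‖) (hfin _ hεu)
        ⟨u, by simp⟩
    have hmax : ∀ v : V, ‖(φ : ∀ _ : V, ℂ) v‖ ≤ ‖(φ : ∀ _ : V, ℂ) v0‖ := by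
      intro v
      by_cases hv : ‖(φ : ∀ _ : V, ℂ) u‖ ≤ ‖(φ : ∀ _ : V, ℂ) v‖
      · exact hv0max v hv
      · exact (not_le.mp hv).le.trans (hv0S : _ ≤ _)
    set a : ℂ := (φ : ∀ _ : V, ℂ) v0 with ha
    have ha0 : a ≠ 0 := by
      intro h
      have h1 := hmax u
      rw [h] at h1
      simp only [norm_zero] at h1
      exact hu (norm_eq_zero.mp (le_antisymm h1 (norm_nonneg _)))
    -- key step: the value propagates to neighbours
    have step : ∀ v w : V, G.Adj v w → (φ : ∀ _ : V, ℂ) v = a →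
        (φ : ∀ _ : V, ℂ) w = a := by
      intro v w hvw hva
      haveI : Fintype (G.neighborSet v) := (hdeg v).1.fintype
      have hsum0 : ∑ x : G.neighborSet v, ((φ : ∀ _ : V, ℂ) v - φ (x : V)) = 0 := by
        rw [← tsum_fintype (L := .unconditional _)]
        exact hzero v
      rw [hva] at hsum0
      have hsumφ : ∑ x : G.neighborSet v, (φ : ∀ _ : V, ℂ) (x : V) =
          (Fintype.card (G.neighborSet v) : ℂ) * a := by
        have h3 := Finset.sum_sub_distrib (s := (Finset.univ : Finset (G.neighborSet v)))
          (f := fun _ => a) (g := fun x => (φ : ∀ _ : V, ℂ) (x : V))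
        rw [h3] at hsum0
        have h1 : ∑ _x : G.neighborSet v, a = (Fintype.card (G.neighborSet v) : ℂ) * a := by
          simp [Finset.sum_const, nsmul_eq_mul]
        linear_combination h1 - hsum0
      have hnrm : ∀ x : G.neighborSet v,
          ‖(starRingEnd ℂ) a * (φ : ∀ _ : V, ℂ) (x : V)‖ ≤ ‖a‖ ^ 2 := by
        intro x
        rw [norm_mul, RCLike.norm_conj, sq]
        exact mul_le_mul_of_nonneg_left (hmax _) (norm_nonneg _)
      -- the real parts of `conj a * φ x` must all equal `‖a‖ ^ 2`
      have hre : ∀ x : G.neighborSet v,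
          ((starRingEnd ℂ) a * (φ : ∀ _ : V, ℂ) (x : V)).re = ‖a‖ ^ 2 := by
        have hle : ∀ x : G.neighborSet v,
            ((starRingEnd ℂ) a * (φ : ∀ _ : V, ℂ) (x : V)).re ≤ ‖a‖ ^ 2 := fun x =>
          (Complex.re_le_norm _).trans (hnrm x)
        have hsumre : ∑ x : G.neighborSet v,
            ((starRingEnd ℂ) a * (φ : ∀ _ : V, ℂ) (x : V)).re =
            (Fintype.card (G.neighborSet v) : ℝ) * ‖a‖ ^ 2 := by
          have h1 : ∑ x : G.neighborSet v,
              ((starRingEnd ℂ) a * (φ : ∀ _ : V, ℂ) (x : V)) =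
              ((Fintype.card (G.neighborSet v) : ℂ)) * ((Complex.normSq a : ℝ) : ℂ) := by
            rw [← Finset.mul_sum, hsumφ, Complex.normSq_eq_conj_mul_self]
            ring
          have h2 := congrArg Complex.re h1
          rw [Complex.re_sum] at h2
          rw [h2]
          have h4 : Complex.normSq a = ‖a‖ ^ 2 := by
            rw [Complex.normSq_eq_norm_sq]
          rw [← h4]
          simp [Complex.mul_re]
        intro x
        by_contra hne
        have hlt := lt_of_le_of_ne (hle x) hne
        have hslt : ∑ y : G.neighborSet v, ((starRingEnd ℂ) a * (φ : ∀ _ : V, ℂ) (y : V)).re <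
            ∑ _y : G.neighborSet v, ‖a‖ ^ 2 :=
          Finset.sum_lt_sum (fun y _ => hle y) ⟨x, Finset.mem_univ x, hlt⟩
        rw [hsumre, Finset.sum_const, Finset.card_univ, nsmul_eq_mul] at hslt
        exact lt_irrefl _ hslt
      -- conclude `φ w = a`
      have hz : (starRingEnd ℂ) a * (φ : ∀ _ : V, ℂ) w = ((‖a‖ ^ 2 : ℝ) : ℂ) := by
        set z : ℂ := (starRingEnd ℂ) a * (φ : ∀ _ : V, ℂ) w with hzdef
        have hre' : z.re = ‖a‖ ^ 2 := hre ⟨w, hvw⟩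
        have hn : ‖z‖ ≤ ‖a‖ ^ 2 := hnrm ⟨w, hvw⟩
        have habs : ‖z‖ ≤ ‖a‖ ^ 2 := hn
        have habs' : z.re ≤ ‖z‖ := Complex.re_le_norm z
        have habs2 : ‖z‖ = z.re := le_antisymm (hre' ▸ habs) habs'
        have hsq := Complex.sq_norm z
        rw [Complex.normSq_apply, habs2] at hsq
        have him : z.im = 0 := by nlinarith [sq_nonneg z.im]
        refine Complex.ext ?_ ?_
        · rw [Complex.ofReal_re]; exact hre'
        · rw [Complex.ofReal_im]; exact him
      have hconj : (starRingEnd ℂ) a ≠ 0 := fun h => ha0 (by simpa using congrArg (starRingEnd ℂ) h)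
      have haa : (starRingEnd ℂ) a * a = ((‖a‖ ^ 2 : ℝ) : ℂ) := by
        rw [← Complex.normSq_eq_conj_mul_self]
        norm_cast
        rw [Complex.normSq_eq_norm_sq]
      exact mul_left_cancel₀ hconj (hz.trans haa.symm)
    refine ⟨G.connectedComponentMk v0, ?_⟩
    have hconst : ∀ v ∈ (G.connectedComponentMk v0).supp, (φ : ∀ _ : V, ℂ) v = a := by
      intro v hv
      rw [SimpleGraph.ConnectedComponent.mem_supp_iff] at hv
      have hr : G.Reachable v0 v := (SimpleGraph.ConnectedComponent.exact hv).symm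
      obtain ⟨p⟩ := hr
      have hwalk : ∀ {x y : V} (_ : G.Walk x y), (φ : ∀ _ : V, ℂ) x = a →
          (φ : ∀ _ : V, ℂ) y = a := by
        intro x y p
        induction p with
        | nil => exact id
        | cons h q ih => exact fun hx => ih (step _ _ h hx)
      exact hwalk p rfl
    refine (hfin ‖a‖ (norm_pos_iff.mpr ha0)).subset ?_
    intro v hv
    simp only [Set.mem_setOf_eq]
    rw [hconst v hv]
  · rintro ⟨c, hc⟩
    set f : V → ℂ := fun v => if v ∈ c.supp then 1 else 0 with hf
    have hmem : Memℓp f 2 := by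
      apply memℓp_gen
      apply summable_of_ne_finset_zero (s := hc.toFinset)
      intro v hv
      have hv' : v ∉ c.supp := by simpa using hv
      have hfv : f v = 0 := if_neg hv'
      rw [hfv]
      simp [Real.zero_rpow (by norm_num : ((2 : ENNReal).toReal ≠ 0))]
    refine ⟨⟨f, hmem⟩, ?_, ?_⟩
    · obtain ⟨v, hv⟩ := c.exists_rep
      intro h0
      have h1 : f v = 0 := by
        have := congrArg (fun ψ : lp (fun _ : V => ℂ) 2 => (ψ : ∀ _ : V, ℂ) v) h0
        simpa using this
      have h2 : v ∈ c.supp := by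
        rw [SimpleGraph.ConnectedComponent.mem_supp_iff]
        exact hv
      rw [hf] at h1
      simp [h2] at h1
    · apply lp.ext
      funext v
      rw [hΔ]
      have hterm : ∀ w : G.neighborSet v,
          ((⟨f, hmem⟩ : lp (fun _ : V => ℂ) 2) : ∀ _ : V, ℂ) v -
          ((⟨f, hmem⟩ : lp (fun _ : V => ℂ) 2) : ∀ _ : V, ℂ) (w : V) = 0 := by
        rintro ⟨w, hw⟩
        have hadj : G.Adj v w := hw
        have hcomp : G.connectedComponentMk v = G.connectedComponentMk w :=
          SimpleGraph.ConnectedComponent.connectedComponentMk_eq_of_adj hadj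
        show f v - f w = 0
        rw [hf]
        simp only [SimpleGraph.ConnectedComponent.mem_supp_iff, hcomp, sub_self]
      rw [tsum_congr hterm]
      simp
end
end

section
/- Let G = (V, E) be an infinite connected simple graph with countable vertex set in which every vertex has at most D neighbours, where D ∈ ℕ with D ≥ 2, and let p ∈ [0,1] satisfy p(D − 1) < 1. Then for every v ∈ V the percolation probability vanishes: θ_{G,v}(p) := ℙ_p({ω ∈ Ω_G : |C_v(ω)| = ∞}) = 0. Consequently, the critical probability p_c(G) = sup{p ∈ [0,1] : θ_{G,v}(p) = 0} satisfies p_c(G) ≥ 1/(D − 1). -/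
open MeasureTheory
open scoped ENNReal

noncomputable section

def openSubgraph {V : Type*} (G : SimpleGraph V) (ω : G.edgeSet → Bool) : SimpleGraph V where
  Adj u w := ∃ h : G.Adj u w, ω ⟨s(u, w), G.mem_edgeSet.mpr h⟩ = true
  symm := by
    constructor
    rintro u w ⟨h, hω⟩
    refine ⟨h.symm, ?_⟩
    convert hω using 2
    exact Subtype.ext Sym2.eq_swap
  loopless := by
    constructor
    rintro u ⟨h, -⟩
    exact G.loopless.irrefl u h

def IsBernoulliPercolation {V : Type*} (G : SimpleGraph V)
    (ℙ : Measure (G.edgeSet → Bool)) (p : ℝ) : Prop :=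
  ∀ (F : Finset G.edgeSet) (σ : G.edgeSet → Bool),
    ℙ {ω | ∀ e ∈ F, ω e = σ e} =
      ∏ e ∈ F, (if σ e = true then ENNReal.ofReal p else ENNReal.ofReal (1 - p))

namespace PercAux

variable {V : Type*} (G : SimpleGraph V)

open scoped Classical in
def edgeList : List V → List G.edgeSet
  | [] => []
  | [_] => []
  | a :: b :: s =>
      (if h : G.Adj a b then [(⟨s(a, b), G.mem_edgeSet.mpr h⟩ : G.edgeSet)] else [])
        ++ edgeList (b :: s)

lemma length_edgeList : ∀ (t : List V), t.Chain' G.Adj → (edgeList G t).length = t.length - 1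
  | [], _ => rfl
  | [_], _ => rfl
  | a :: b :: s, h => by
    have h1 : G.Adj a b := (List.isChain_cons_cons.mp h).1
    have h2 := (List.isChain_cons_cons.mp h).2
    have IH := length_edgeList (b :: s) h2
    simp only [edgeList, dif_pos h1, List.length_append, List.length_singleton] at *
    simp at IH ⊢
    omega

lemma mem_edgeList_mem : ∀ (t : List V) (e : G.edgeSet), e ∈ edgeList G t →
    ∀ x, x ∈ (e : Sym2 V) → x ∈ t
  | [], e, he => by simp [edgeList] at he
  | [_], e, he => by simp [edgeList] at he
  | a :: b :: s, e, he => by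
    intro x hx
    simp only [edgeList] at he
    rcases List.mem_append.mp he with h1 | h2
    · by_cases hab : G.Adj a b
      · simp only [dif_pos hab, List.mem_singleton] at h1
        subst h1
        rcases Sym2.mem_iff.mp hx with rfl | rfl <;> simp
      · simp [hab] at h1
    · have := mem_edgeList_mem (b :: s) e h2 x hx
      simp at this ⊢
      tauto

lemma nodup_edgeList : ∀ (t : List V), t.Nodup → (edgeList G t).Nodup
  | [], _ => by simp [edgeList]
  | [_], _ => by simp [edgeList]
  | a :: b :: s, h => by
    have hnd := nodup_edgeList (b :: s) h.of_cons
    by_cases hab : G.Adj a b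
    · simp only [edgeList, dif_pos hab, List.singleton_append, List.nodup_cons]
      refine ⟨fun hmem => ?_, hnd⟩
      have : a ∈ b :: s := mem_edgeList_mem G (b :: s) _ hmem a (by simp)
      exact (List.nodup_cons.mp h).1 this
    · simpa only [edgeList, dif_neg hab, List.nil_append] using hnd

lemma edgeList_open (ω : G.edgeSet → Bool) : ∀ (t : List V),
    t.Chain' (openSubgraph G ω).Adj → ∀ e ∈ edgeList G t, ω e = true
  | [], _, e, he => by simp [edgeList] at he
  | [_], _, e, he => by simp [edgeList] at he
  | a :: b :: s, h, e, he => by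
    obtain ⟨⟨hab, hω⟩, h2⟩ := List.isChain_cons_cons.mp h
    simp only [edgeList, dif_pos hab, List.singleton_append, List.mem_cons] at he
    rcases he with rfl | he
    · exact hω
    · exact edgeList_open ω (b :: s) h2 e he

open scoped Classical in
def pathFinset (hfin : ∀ w : V, (G.neighborSet w).Finite) (v : V) : ℕ → Finset (List V)
  | 0 => {[v]}
  | n + 1 =>
      (pathFinset hfin v n).biUnion fun t =>
        ((hfin (t.head?.getD v)).toFinset.filter fun x => x ∉ t).image fun x => x :: t

lemma mem_pathFinset (hfin : ∀ w : V, (G.neighborSet w).Finite) (v : V) :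
    ∀ (n : ℕ) (t : List V), t ∈ pathFinset G hfin v n ↔
      (t.Chain' G.Adj ∧ t.Nodup ∧ t.length = n + 1 ∧ t.getLast? = some v) := by
  intro n
  induction n with
  | zero =>
    intro t
    simp only [pathFinset, Finset.mem_singleton]
    constructor
    · rintro rfl
      simp [List.Chain']
    · rintro ⟨-, -, hl, hlast⟩
      obtain ⟨a, rfl⟩ := List.length_eq_one_iff.mp hl
      simp at hlast
      simp [hlast]
  | succ n IH =>
    intro t
    simp only [pathFinset, Finset.mem_biUnion, Finset.mem_image, Finset.mem_filter,
      Set.Finite.mem_toFinset, SimpleGraph.mem_neighborSet]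
    constructor
    · rintro ⟨s, hs, x, ⟨hadj, hx⟩, rfl⟩
      obtain ⟨hc, hn, hl, hlast⟩ := (IH s).mp hs
      have hsne : s ≠ [] := by intro h; subst h; simp at hl
      obtain ⟨b, s', rfl⟩ := List.exists_cons_of_ne_nil hsne
      simp only [List.head?_cons, Option.getD_some] at hadj
      refine ⟨List.isChain_cons_cons.mpr ⟨hadj.symm, hc⟩, List.nodup_cons.mpr ⟨hx, hn⟩, by simp [← hl],
        by rwa [List.getLast?_cons_cons]⟩
    · rintro ⟨hc, hn, hl, hlast⟩
      have hne : t ≠ [] := by intro h; rw [h] at hl; simp at hl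
      obtain ⟨x, t', rfl⟩ := List.exists_cons_of_ne_nil hne
      have hne2 : t' ≠ [] := by intro h; rw [h] at hl; simp at hl <;> omega
      obtain ⟨b, s', rfl⟩ := List.exists_cons_of_ne_nil hne2
      refine ⟨b :: s', (IH _).mpr ⟨(List.isChain_cons_cons.mp hc).2, hn.of_cons, by simp at hl ⊢; omega,
        by rwa [List.getLast?_cons_cons] at hlast⟩, x, ⟨?_, (List.nodup_cons.mp hn).1⟩, rfl⟩
      simpa using (List.isChain_cons_cons.mp hc).1.symm

lemma card_pathFinset (hfin : ∀ w : V, (G.neighborSet w).Finite) (v : V) (D : ℕ)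
    (hD : ∀ w : V, (G.neighborSet w).ncard ≤ D) :
    ∀ n : ℕ, (pathFinset G hfin v (n + 1)).card ≤ D * (D - 1) ^ n := by
  classical
  have hcard : ∀ w, (hfin w).toFinset.card ≤ D := by
    intro w
    rw [← Set.ncard_eq_toFinset_card _ (hfin w)]
    exact hD w
  intro n
  induction n with
  | zero =>
    calc (pathFinset G hfin v 1).card
        ≤ ∑ t ∈ pathFinset G hfin v 0,
            (((hfin (t.head?.getD v)).toFinset.filter fun x => x ∉ t).image
              fun x => x :: t).card := by
          apply le_trans (le_of_eq (by rfl)) (Finset.card_biUnion_le)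
      _ ≤ ∑ t ∈ pathFinset G hfin v 0, D := by
          refine Finset.sum_le_sum fun t ht => ?_
          exact le_trans (Finset.card_image_le) (le_trans (Finset.card_filter_le _ _) (hcard _))
      _ = D := by simp [pathFinset]
      _ ≤ D * (D - 1) ^ 0 := by simp
  | succ n IH =>
    have hstep : ∀ t ∈ pathFinset G hfin v (n + 1),
        (((hfin (t.head?.getD v)).toFinset.filter fun x => x ∉ t).image
          fun x => x :: t).card ≤ D - 1 := by
      intro t ht
      obtain ⟨hc, hn, hl, hlast⟩ := (mem_pathFinset G hfin v _ t).mp ht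
      have hne : t ≠ [] := by intro h; rw [h] at hl; simp at hl
      obtain ⟨a, t', rfl⟩ := List.exists_cons_of_ne_nil hne
      have hne2 : t' ≠ [] := by intro h; rw [h] at hl; simp at hl <;> omega
      obtain ⟨b, s', rfl⟩ := List.exists_cons_of_ne_nil hne2
      have hab : G.Adj a b := (List.isChain_cons_cons.mp hc).1
      have hbmem : b ∈ (hfin ((a :: b :: s').head?.getD v)).toFinset := by
        simp [SimpleGraph.mem_neighborSet, hab]
      refine le_trans Finset.card_image_le ?_
      have hsub : ((hfin ((a :: b :: s').head?.getD v)).toFinset.filter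
          fun x => x ∉ a :: b :: s') ⊆ (hfin ((a :: b :: s').head?.getD v)).toFinset.erase b := by
        rw [Finset.subset_erase]
        refine ⟨Finset.filter_subset _ _, fun hb => ?_⟩
        have := (Finset.mem_filter.mp hb).2
        simp at this
      calc _ ≤ ((hfin ((a :: b :: s').head?.getD v)).toFinset.erase b).card :=
            Finset.card_le_card hsub
        _ = (hfin ((a :: b :: s').head?.getD v)).toFinset.card - 1 :=
            Finset.card_erase_of_mem hbmem
        _ ≤ D - 1 := Nat.sub_le_sub_right (hcard _) 1
    calc (pathFinset G hfin v (n + 2)).card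
        ≤ ∑ t ∈ pathFinset G hfin v (n + 1),
            (((hfin (t.head?.getD v)).toFinset.filter fun x => x ∉ t).image
              fun x => x :: t).card := by
          apply le_trans (le_of_eq (by rfl)) (Finset.card_biUnion_le)
      _ ≤ ∑ t ∈ pathFinset G hfin v (n + 1), (D - 1) := Finset.sum_le_sum hstep
      _ = (pathFinset G hfin v (n + 1)).card * (D - 1) := by
          rw [Finset.sum_const, smul_eq_mul]
      _ ≤ (D * (D - 1) ^ n) * (D - 1) := Nat.mul_le_mul_right _ IH
      _ = D * (D - 1) ^ (n + 1) := by ring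

lemma support_getLast? {V : Type*} {G : SimpleGraph V} :
    ∀ {u w : V} (q : G.Walk u w), q.support.getLast? = some w := by
  intro u w q
  induction q with
  | nil => rfl
  | @cons a b c h p ih =>
    rw [SimpleGraph.Walk.support_cons, SimpleGraph.Walk.support_eq_cons p,
      List.getLast?_cons_cons, ← SimpleGraph.Walk.support_eq_cons p]
    exact ih

lemma main_zero {V : Type*} (G : SimpleGraph V) (D : ℕ) (hD : 2 ≤ D)
    (hdeg : ∀ v : V, (G.neighborSet v).Finite ∧ (G.neighborSet v).ncard ≤ D)
    (p : ℝ) (hp0 : 0 ≤ p) (hp1 : p ≤ 1) (hpD : p * ((D : ℝ) - 1) < 1)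
    (ℙ : Measure (G.edgeSet → Bool)) [IsProbabilityMeasure ℙ]
    (hℙ : IsBernoulliPercolation G ℙ p) (v : V) :
    ℙ {ω | ((openSubgraph G ω).connectedComponentMk v).supp.Infinite} = 0 := by
  classical
  have hfin : ∀ w : V, (G.neighborSet w).Finite := fun w => (hdeg w).1
  have hD2 : (2 : ℝ) ≤ (D : ℝ) := by exact_mod_cast hD
  have key : ∀ n : ℕ,
      ℙ {ω | ((openSubgraph G ω).connectedComponentMk v).supp.Infinite} ≤
        ((D * (D - 1) ^ n : ℕ) : ℝ≥0∞) * ENNReal.ofReal p ^ (n + 1) := by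
    intro n
    have hsub : {ω : G.edgeSet → Bool |
        ((openSubgraph G ω).connectedComponentMk v).supp.Infinite}
        ⊆ ⋃ t ∈ pathFinset G hfin v (n + 1),
            {ω : G.edgeSet → Bool | ∀ e ∈ (edgeList G t).toFinset, ω e = true} := by
      intro ω hω
      simp only [Set.mem_setOf_eq] at hω
      have hclaim : ∃ (w : V) (q : (openSubgraph G ω).Walk v w),
          q.IsPath ∧ n + 1 ≤ q.length := by
        by_contra hcon
        push_neg at hcon
        have hreach : ∀ u ∈ ((openSubgraph G ω).connectedComponentMk v).supp,
            (openSubgraph G ω).Reachable v u := by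
          intro u hu
          exact (SimpleGraph.ConnectedComponent.eq.mp
            ((SimpleGraph.ConnectedComponent.mem_supp_iff _ _).mp hu)).symm
        set f : V → List V := fun u =>
          if h : (openSubgraph G ω).Reachable v u then (h.some.toPath).1.support else []
          with hf_def
        have hf : ∀ u ∈ ((openSubgraph G ω).connectedComponentMk v).supp,
            (f u).Chain' G.Adj ∧ (f u).Nodup ∧ (f u).head? = some v ∧
            (f u).length ≤ n + 1 ∧ (f u).getLast? = some u := by
          intro u hu
          have hr := hreach u hu
          have hfu : f u = (hr.some.toPath).1.support := dif_pos hr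
          have hqp : (hr.some.toPath).1.IsPath := (hr.some.toPath).2
          rw [hfu]
          refine ⟨?_, hqp.support_nodup, ?_, ?_, ?_⟩
          · exact List.IsChain.imp (fun a b hab => hab.choose)
              ((hr.some.toPath).1.isChain_adj_support)
          · rw [SimpleGraph.Walk.support_eq_cons]; rfl
          · have hlt := hcon u (hr.some.toPath).1 hqp
            rw [SimpleGraph.Walk.length_support]
            omega
          · exact support_getLast? _
        have hTfin : {l : List V | l.Chain' G.Adj ∧ l.Nodup ∧ l.head? = some v ∧
            l.length ≤ n + 1}.Finite := by
          have hsubT : {l : List V | l.Chain' G.Adj ∧ l.Nodup ∧ l.head? = some v ∧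
              l.length ≤ n + 1} ⊆
              ⋃ k ∈ Set.Iio (n + 1), (fun l : List V => l.reverse) ''
                ↑(pathFinset G hfin v k) := by
            rintro l ⟨hc, hn, hh, hlen⟩
            have hlne : l ≠ [] := by intro h; rw [h] at hh; simp at hh
            have hlpos : 1 ≤ l.length := List.length_pos_iff.mpr hlne
            refine Set.mem_biUnion (show l.length - 1 ∈ Set.Iio (n + 1) by
              simp only [Set.mem_Iio]; omega) ?_
            refine ⟨l.reverse, ?_, by simp⟩
            rw [Finset.mem_coe, mem_pathFinset]
            refine ⟨List.isChain_reverse.mpr (List.IsChain.imp (fun a b h => h.symm) hc),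
              List.nodup_reverse.mpr hn, by simp only [List.length_reverse]; omega,
              by rw [List.getLast?_reverse]; exact hh⟩
          exact (Set.Finite.biUnion (Set.finite_Iio _) fun k _ =>
            ((pathFinset G hfin v k).finite_toSet.image _)).subset hsubT
        refine absurd hω (Set.not_infinite.mpr ?_)
        refine Set.Finite.of_finite_image (f := f) (hTfin.subset ?_) ?_
        · rintro _ ⟨u, hu, rfl⟩
          obtain ⟨h1, h2, h3, h4, h5⟩ := hf u hu
          exact ⟨h1, h2, h3, h4⟩
        · intro u1 h1 u2 h2 hEq
          have e1 := (hf u1 h1).2.2.2.2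
          have e2 := (hf u2 h2).2.2.2.2
          rw [hEq, e2] at e1
          exact (Option.some_inj.mp e1).symm
      obtain ⟨w, q, hq, hlen⟩ := hclaim
      have hsl : q.support.length = q.length + 1 := q.length_support
      have hl_len : (q.support.take (n + 2)).length = n + 2 := by
        rw [List.length_take]; omega
      have hl_chain : (q.support.take (n + 2)).Chain' (openSubgraph G ω).Adj :=
        List.IsChain.take (q.isChain_adj_support) _
      have hl_nodup : (q.support.take (n + 2)).Nodup :=
        (List.take_sublist _ _).nodup hq.support_nodup
      have hl_head : (q.support.take (n + 2)).head? = some v := by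
        rw [List.head?_take, if_neg (by omega : ¬ (n + 2 = 0)),
          SimpleGraph.Walk.support_eq_cons]
        rfl
      have hmem : (q.support.take (n + 2)).reverse ∈ pathFinset G hfin v (n + 1) := by
        rw [mem_pathFinset]
        refine ⟨List.isChain_reverse.mpr (List.IsChain.imp
            (fun a b hab => (hab.choose).symm) hl_chain),
          List.nodup_reverse.mpr hl_nodup, by simp only [List.length_reverse]; omega,
          by rw [List.getLast?_reverse]; exact hl_head⟩
      refine Set.mem_biUnion hmem ?_
      intro e he
      refine edgeList_open G ω _ ?_ e (List.mem_toFinset.mp he)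
      exact List.isChain_reverse.mpr (List.IsChain.imp
        (fun a b hab => (openSubgraph G ω).symm.symm _ _ hab) hl_chain)
    have hA : ∀ t ∈ pathFinset G hfin v (n + 1),
        ℙ {ω : G.edgeSet → Bool | ∀ e ∈ (edgeList G t).toFinset, ω e = true} =
          ENNReal.ofReal p ^ (n + 1) := by
      intro t ht
      obtain ⟨hc, hn, hl, -⟩ := (mem_pathFinset G hfin v _ t).mp ht
      have hcard : (edgeList G t).toFinset.card = n + 1 := by
        rw [List.toFinset_card_of_nodup (nodup_edgeList G t hn), length_edgeList G t hc, hl]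
        omega
      calc ℙ {ω : G.edgeSet → Bool | ∀ e ∈ (edgeList G t).toFinset, ω e = true}
          = ∏ _e ∈ (edgeList G t).toFinset, ENNReal.ofReal p := by
            have := hℙ (edgeList G t).toFinset (fun _ => true)
            simpa using this
        _ = ENNReal.ofReal p ^ (n + 1) := by rw [Finset.prod_const, hcard]
    calc ℙ {ω | ((openSubgraph G ω).connectedComponentMk v).supp.Infinite}
        ≤ ℙ (⋃ t ∈ pathFinset G hfin v (n + 1),
            {ω : G.edgeSet → Bool | ∀ e ∈ (edgeList G t).toFinset, ω e = true}) :=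
          measure_mono hsub
      _ ≤ ∑ t ∈ pathFinset G hfin v (n + 1),
            ℙ {ω : G.edgeSet → Bool | ∀ e ∈ (edgeList G t).toFinset, ω e = true} :=
          measure_biUnion_finset_le _ _
      _ = ∑ _t ∈ pathFinset G hfin v (n + 1), ENNReal.ofReal p ^ (n + 1) :=
          Finset.sum_congr rfl hA
      _ = (pathFinset G hfin v (n + 1)).card * ENNReal.ofReal p ^ (n + 1) := by
          rw [Finset.sum_const, nsmul_eq_mul]
      _ ≤ ((D * (D - 1) ^ n : ℕ) : ℝ≥0∞) * ENNReal.ofReal p ^ (n + 1) :=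
          mul_le_mul_left
            (Nat.cast_le.mpr (card_pathFinset G hfin v D (fun w => (hdeg w).2) n)) _
  have heq : ∀ n : ℕ, ((D * (D - 1) ^ n : ℕ) : ℝ≥0∞) * ENNReal.ofReal p ^ (n + 1)
      = ENNReal.ofReal (((D : ℝ) * p) * (p * ((D : ℝ) - 1)) ^ n) := by
    intro n
    rw [← ENNReal.ofReal_pow hp0, ← ENNReal.ofReal_natCast,
      ← ENNReal.ofReal_mul (by positivity)]
    congr 1
    rw [mul_pow]
    push_cast [Nat.cast_sub (by omega : 1 ≤ D)]
    ring
  have htend : Filter.Tendsto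
      (fun n : ℕ => ENNReal.ofReal (((D : ℝ) * p) * (p * ((D : ℝ) - 1)) ^ n))
      Filter.atTop (nhds 0) := by
    have h1 : Filter.Tendsto (fun n : ℕ => ((D : ℝ) * p) * (p * ((D : ℝ) - 1)) ^ n)
        Filter.atTop (nhds 0) := by
      have h2 := tendsto_pow_atTop_nhds_zero_of_lt_one
        (mul_nonneg hp0 (by linarith)) hpD
      simpa using h2.const_mul ((D : ℝ) * p)
    simpa using ENNReal.tendsto_ofReal h1
  have hle := ge_of_tendsto' htend (fun n => (heq n) ▸ key n)
  exact le_antisymm hle zero_le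

end PercAux

/-- Let `G = (V, E)` be an infinite connected simple graph with countable
vertex set in which every vertex has at most `D` neighbours (`D ≥ 2`), and let `p ∈ [0,1]`
satisfy `p(D − 1) < 1`. Then for every `v ∈ V` the percolation probability vanishes:
`θ_{G,v}(p) = ℙ_p(|C_v| = ∞) = 0`. Consequently, the critical probability
`p_c(G) = sup {q ∈ [0,1] : θ_{G,v}(q) = 0}` satisfies `p_c(G) ≥ 1/(D − 1)`. -/
theorem percolation_prob_zero_and_critical_prob_lower_bound
    {V : Type*} [Countable V] [Infinite V] (G : SimpleGraph V) (hG : G.Connected)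
    (D : ℕ) (hD : 2 ≤ D)
    (hdeg : ∀ v : V, (G.neighborSet v).Finite ∧ (G.neighborSet v).ncard ≤ D)
    (p : ℝ) (hp0 : 0 ≤ p) (hp1 : p ≤ 1) (hpD : p * ((D : ℝ) - 1) < 1)
    (ℙ : Measure (G.edgeSet → Bool)) [IsProbabilityMeasure ℙ]
    (hℙ : IsBernoulliPercolation G ℙ p) :
    (∀ v : V, ℙ {ω | ((openSubgraph G ω).connectedComponentMk v).supp.Infinite} = 0) ∧
    (∀ v : V,
      1 / ((D : ℝ) - 1) ≤
        sSup {q : ℝ | q ∈ Set.Icc (0 : ℝ) 1 ∧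
          ∀ Q : Measure (G.edgeSet → Bool), IsProbabilityMeasure Q →
            IsBernoulliPercolation G Q q →
            Q {ω | ((openSubgraph G ω).connectedComponentMk v).supp.Infinite} = 0}) := by
  have hD2 : (2 : ℝ) ≤ (D : ℝ) := by exact_mod_cast hD
  refine ⟨fun v => PercAux.main_zero G D hD hdeg p hp0 hp1 hpD ℙ hℙ v, fun v => ?_⟩
  set S := {q : ℝ | q ∈ Set.Icc (0 : ℝ) 1 ∧
      ∀ Q : Measure (G.edgeSet → Bool), IsProbabilityMeasure Q →
        IsBernoulliPercolation G Q q →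
        Q {ω | ((openSubgraph G ω).connectedComponentMk v).supp.Infinite} = 0} with hS
  have hpos : (0 : ℝ) < 1 / ((D : ℝ) - 1) := by
    apply one_div_pos.mpr; linarith
  have hle1 : 1 / ((D : ℝ) - 1) ≤ 1 := by
    rw [div_le_one (by linarith)]; linarith
  have hsub : Set.Ico (0 : ℝ) (1 / ((D : ℝ) - 1)) ⊆ S := by
    rintro q ⟨hq0, hq1⟩
    have hq1' : q * ((D : ℝ) - 1) < 1 := (lt_div_iff₀ (by linarith)).mp hq1
    have hqle1 : q ≤ 1 := le_trans (le_of_lt hq1) hle1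
    exact ⟨⟨hq0, hqle1⟩, fun Q hQ hQB => by
      haveI := hQ
      exact PercAux.main_zero G D hD hdeg q hq0 hqle1 hq1' Q hQB v⟩
  have hBdd : BddAbove S := ⟨1, fun q hq => hq.1.2⟩
  calc 1 / ((D : ℝ) - 1) = sSup (Set.Ico (0 : ℝ) (1 / ((D : ℝ) - 1))) :=
        (csSup_Ico hpos).symm
    _ ≤ sSup S := csSup_le_csSup hBdd ⟨0, le_refl 0, hpos⟩ hsub
end
end

section
/- Fix d ∈ ℕ, r > 0, D ∈ ℕ with D ≥ 2, l_max ∈ (0,∞), and p ∈ [0, 1/(D−1)). Then there exists a constant λ(p) ∈ (0,∞) such that, uniformly for every simple graph G = (V, E) whose vertex set V ⊆ ℝ^d is uniformly discrete of radius r, in which every vertex has at most D neighbours, and whose edges have length at most l_max, and uniformly for every v ∈ V and every n ∈ ℕ with n ≥ 1, one has ℙ_p({ω ∈ Ω_G : |C_v(ω)| ≥ n}) ≤ 2 · exp(−n λ(p)). -/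
open MeasureTheory
open scoped ENNReal

noncomputable section

namespace ClusterDecay

variable {Vt : Type*} [DecidableEq Vt]

structure ESt (Vt : Type*) where
  queue : List Vt
  seen  : Finset Vt
  pend  : List (Vt × Vt)
  log   : List ((Vt × Vt) × Bool)

variable (nbs : Vt → List Vt)

def fill (u : Vt) (seen : Finset Vt) : List (Vt × Vt) :=
  ((nbs u).filter (fun w => w ∉ seen)).map (fun w => (u, w))

def norm : List Vt → Finset Vt → List (Vt × Vt) × List Vt
  | [], _ => ([], [])
  | u :: q, seen =>
    match fill nbs u seen with
    | [] => norm q seen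
    | e :: l => (e :: l, q)

def nstate (st : ESt Vt) : ESt Vt :=
  match st.pend with
  | _ :: _ => st
  | [] => ⟨(norm nbs st.queue st.seen).2, st.seen, (norm nbs st.queue st.seen).1, st.log⟩

def stepB (st : ESt Vt) (b : Bool) : ESt Vt :=
  match (nstate nbs st).pend with
  | [] => st
  | (u, w) :: rest =>
    if b then ⟨(nstate nbs st).queue ++ [w], insert w (nstate nbs st).seen, rest,
               (nstate nbs st).log ++ [((u, w), b)]⟩
    else ⟨(nstate nbs st).queue, (nstate nbs st).seen, rest,
          (nstate nbs st).log ++ [((u, w), b)]⟩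

def runE (st : ESt Vt) (s : List Bool) : ESt Vt := s.foldl (stepB nbs) st

def obit (ωf : Vt × Vt → Bool) (st : ESt Vt) : Bool :=
  match (nstate nbs st).pend with
  | [] => false
  | e :: _ => ωf e

def trn (ωf : Vt × Vt → Bool) : ESt Vt → ℕ → List Bool
  | _, 0 => []
  | st, k+1 => obit nbs ωf st :: trn ωf (stepB nbs st (obit nbs ωf st)) k

def Allowed : ESt Vt → List Bool → Prop
  | _, [] => True
  | st, b :: s => ((nstate nbs st).pend = [] → b = false) ∧ Allowed (stepB nbs st b) s

def gval (u : Bool → ℝ≥0∞) : ESt Vt → List Bool → ℝ≥0∞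
  | _, [] => 1
  | st, b :: s =>
    match (nstate nbs st).pend with
    | [] => if b then 0 else gval u st s
    | _ :: _ => u b * gval u (stepB nbs st b) s

/-- basic shape lemmas -/
lemma nstate_seen (st : ESt Vt) : (nstate nbs st).seen = st.seen := by
  unfold nstate; cases st.pend <;> rfl

lemma nstate_log (st : ESt Vt) : (nstate nbs st).log = st.log := by
  unfold nstate; cases st.pend <;> rfl

lemma nstate_of_pend_ne (st : ESt Vt) (h : st.pend ≠ []) : nstate nbs st = st := by
  unfold nstate; cases hp : st.pend with
  | nil => exact absurd hp h
  | cons a l => rfl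

lemma nstate_of_pend_eq (st : ESt Vt) (h : st.pend = []) :
    nstate nbs st = ⟨(norm nbs st.queue st.seen).2, st.seen,
      (norm nbs st.queue st.seen).1, st.log⟩ := by
  unfold nstate; rw [h]

lemma stepB_dead (st : ESt Vt) (b : Bool) (h : (nstate nbs st).pend = []) :
    stepB nbs st b = st := by
  unfold stepB; rw [h]

lemma stepB_alive (st : ESt Vt) (b : Bool) (u w : Vt) (rest : List (Vt × Vt))
    (h : (nstate nbs st).pend = (u, w) :: rest) :
    stepB nbs st b = if b then ⟨(nstate nbs st).queue ++ [w], insert w (nstate nbs st).seen,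
        rest, (nstate nbs st).log ++ [((u, w), b)]⟩
      else ⟨(nstate nbs st).queue, (nstate nbs st).seen, rest,
        (nstate nbs st).log ++ [((u, w), b)]⟩ := by
  unfold stepB; rw [h]

lemma runE_nil (st : ESt Vt) : runE nbs st [] = st := rfl

lemma runE_cons (st : ESt Vt) (b : Bool) (s : List Bool) :
    runE nbs st (b :: s) = runE nbs (stepB nbs st b) s := rfl

lemma norm_spec (q : List Vt) (seen : Finset Vt) :
    ((norm nbs q seen).1 = [] ∧ (norm nbs q seen).2 = [] ∧ ∀ u ∈ q, fill nbs u seen = [])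
    ∨ ∃ u pre, q = pre ++ u :: (norm nbs q seen).2 ∧
        (∀ x ∈ pre, fill nbs x seen = []) ∧
        (norm nbs q seen).1 = fill nbs u seen ∧ (norm nbs q seen).1 ≠ [] := by
  induction q with
  | nil => left; exact ⟨rfl, rfl, by simp⟩
  | cons u q ih =>
    by_cases h : fill nbs u seen = []
    · have hn : norm nbs (u :: q) seen = norm nbs q seen := by
        simp only [norm, h]
      rw [hn]
      rcases ih with ⟨h1, h2, h3⟩ | ⟨u', pre, h1, h2, h3, h4⟩
      · left; refine ⟨h1, h2, ?_⟩
        intro x hx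
        rcases List.mem_cons.mp hx with rfl | hx
        · exact h
        · exact h3 x hx
      · right
        refine ⟨u', u :: pre, congrArg (List.cons u) h1, ?_, h3, h4⟩
        intro x hx
        rcases List.mem_cons.mp hx with rfl | hx
        · exact h
        · exact h2 x hx
    · have hn : norm nbs (u :: q) seen = (fill nbs u seen, q) := by
        unfold norm
        cases hf : fill nbs u seen with
        | nil => exact absurd hf h
        | cons e l => rfl
      rw [hn]
      right
      exact ⟨u, [], by simp, by simp, rfl, h⟩



variable {nbs : Vt → List Vt}

section Inv

variable (G : SimpleGraph Vt) (v : Vt) (D : ℕ)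

def cwt (u : Vt) : ℕ := if u = v then D else D - 1

def pot (st : ESt Vt) : ℕ := st.pend.length + (st.queue.map (cwt v D)).sum

structure Inv (st : ESt Vt) : Prop where
  hvseen : v ∈ st.seen
  hqnd : st.queue.Nodup
  hqseen : ∀ x ∈ st.queue, x ∈ st.seen
  hqsrc : ∀ x ∈ st.queue, x = v ∨ ∃ a ∈ st.seen, G.Adj a x
  hpadj : ∀ e ∈ st.pend, G.Adj e.1 e.2
  hpseen : ∀ e ∈ st.pend, e.1 ∈ st.seen ∧ e.1 ∉ st.queue ∧ e.2 ∉ st.seen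
  hpsame : ∀ e ∈ st.pend, ∀ e' ∈ st.pend, e.1 = e'.1
  hpnd : (st.pend.map Prod.snd).Nodup
  hladj : ∀ x ∈ st.log, G.Adj x.1.1 x.1.2
  hlseen : ∀ x ∈ st.log, x.1.1 ∈ st.seen ∧ x.1.1 ∉ st.queue
  hlnd : (st.log.map (fun x => Sym2.mk x.1.1 x.1.2)).Nodup
  hlp : ∀ x ∈ st.log, ∀ e ∈ st.pend, Sym2.mk x.1.1 x.1.2 ≠ Sym2.mk e.1 e.2
  hcard : st.seen.card = 1 + (st.log.map Prod.snd).count true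
  hpot : st.log.length + pot v D st ≤ D + (D - 1) * ((st.log.map Prod.snd).count true)

variable {G v D}
variable (hn1 : ∀ u w, w ∈ nbs u ↔ G.Adj u w) (hn2 : ∀ u, (nbs u).Nodup)
  (hn3 : ∀ u, (nbs u).length ≤ D)

lemma mem_fill {u : Vt} {seen : Finset Vt} {e : Vt × Vt} :
    e ∈ fill nbs u seen ↔ e.1 = u ∧ e.2 ∈ nbs u ∧ e.2 ∉ seen := by
  unfold fill
  simp only [List.mem_map, List.mem_filter, decide_eq_true_eq]
  constructor
  · rintro ⟨w, ⟨hw1, hw2⟩, rfl⟩; exact ⟨rfl, hw1, hw2⟩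
  · rintro ⟨h1, h2, h3⟩
    exact ⟨e.2, ⟨h2, h3⟩, by rw [← h1]⟩

include hn2 in
lemma fill_snd_nodup (u : Vt) (seen : Finset Vt) :
    ((fill nbs u seen).map Prod.snd).Nodup := by
  unfold fill
  rw [List.map_map]
  refine List.Nodup.map ?_ ((hn2 u).filter _)
  exact fun a b hab => by simpa using hab

include hn3 in
lemma fill_length_le (u : Vt) (seen : Finset Vt) :
    (fill nbs u seen).length ≤ D := by
  unfold fill
  rw [List.length_map]
  exact le_trans (List.length_filter_le _ _) (hn3 u)

include hn1 hn3 in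
lemma fill_length_lt {u : Vt} {seen : Finset Vt} (a : Vt) (ha : a ∈ seen) (hadj : G.Adj a u) :
    (fill nbs u seen).length ≤ D - 1 := by
  unfold fill
  rw [List.length_map]
  have hmem : a ∈ nbs u := (hn1 u a).mpr hadj.symm
  have : ((nbs u).filter (fun w => w ∉ seen)).length < (nbs u).length :=
    List.length_filter_lt_length_iff_exists.mpr ⟨a, hmem, by simp [ha]⟩
  have := lt_of_lt_of_le this (hn3 u)
  omega

include hn1 hn2 hn3 in
lemma inv_nstate {st : ESt Vt} (h : Inv G v D st) :
    Inv G v D (nstate nbs st) ∧ pot v D (nstate nbs st) ≤ pot v D st := by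
  by_cases hp : st.pend = []
  swap
  · rw [nstate_of_pend_ne nbs st hp]; exact ⟨h, le_rfl⟩
  rw [nstate_of_pend_eq nbs st hp]
  rcases norm_spec nbs st.queue st.seen with ⟨e1, e2, _⟩ | ⟨u, pre, hq, hpre, hfill, hne⟩
  · rw [e1, e2]
    have hpot0 : pot v D st = (st.queue.map (cwt v D)).sum := by
      unfold pot; rw [hp]; simp
    refine ⟨⟨h.hvseen, by simp, by simp, by simp, by simp, by simp, by simp, by simp,
      h.hladj, fun x hx => ⟨(h.hlseen x hx).1, by simp⟩, h.hlnd, by simp, h.hcard, ?_⟩, ?_⟩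
    · refine le_trans ?_ h.hpot
      unfold pot; simp
    · unfold pot; simp [hpot0]
  · set q2 := (norm nbs st.queue st.seen).2 with hq2
    set pd := (norm nbs st.queue st.seen).1 with hpd
    have huq : u ∈ st.queue := by rw [hq]; simp
    have hsub : List.Sublist (u :: q2) st.queue := by
      rw [hq]; exact List.sublist_append_right _ _
    have hnd2 : (u :: q2).Nodup := h.hqnd.sublist hsub
    have hq2sub : ∀ x ∈ q2, x ∈ st.queue := fun x hx => hsub.mem (List.mem_cons_of_mem u hx)
    have huseen : u ∈ st.seen := h.hqseen u huq
    have hfl : ∀ e ∈ pd, e.1 = u ∧ e.2 ∈ nbs u ∧ e.2 ∉ st.seen := by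
      intro e he; rw [hfill] at he; exact mem_fill.mp he
    refine ⟨⟨h.hvseen, (List.nodup_cons.mp hnd2).2, fun x hx => h.hqseen x (hq2sub x hx),
      fun x hx => h.hqsrc x (hq2sub x hx), ?_, ?_, ?_, ?_, h.hladj, ?_, h.hlnd, ?_, h.hcard, ?_⟩, ?_⟩
    · intro e he
      obtain ⟨h1, h2, _⟩ := hfl e he
      have := (hn1 u e.2).mp h2
      rw [h1]; exact this
    · intro e he
      obtain ⟨h1, _, h3⟩ := hfl e he
      exact ⟨h1 ▸ huseen, h1 ▸ (List.nodup_cons.mp hnd2).1, h3⟩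
    · intro e he e' he'
      rw [(hfl e he).1, (hfl e' he').1]
    · rw [hfill]; exact fill_snd_nodup hn2 u st.seen
    · intro x hx
      exact ⟨(h.hlseen x hx).1, fun hc => (h.hlseen x hx).2 (hq2sub _ hc)⟩
    · intro x hx e he
      obtain ⟨h1, _, h3⟩ := hfl e he
      intro hc
      rcases Sym2.mk_eq_mk_iff.mp hc with h' | h'
      · refine (h.hlseen x hx).2 ?_
        have hx1 : x.1.1 = e.1 := congrArg Prod.fst h'
        rw [hx1, h1]; exact huq
      · refine h3 ?_
        have hx1 : x.1.1 = e.2 := congrArg Prod.fst h'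
        rw [← hx1]; exact (h.hlseen x hx).1
    all_goals {
      have hcu : pd.length ≤ cwt v D u := by
        rcases h.hqsrc u huq with rfl | ⟨a, ha, hadj⟩
        · unfold cwt; rw [if_pos rfl, hfill]; exact fill_length_le hn3 u st.seen
        · refine le_trans ?_ (le_of_eq (rfl : (if u = v then D else D - 1) = cwt v D u))
          by_cases huv : u = v
          · rw [if_pos huv, hfill]; exact fill_length_le hn3 u st.seen
          · rw [if_neg huv, hfill]; exact fill_length_lt hn1 hn3 a ha hadj
      have hqsum : (st.queue.map (cwt v D)).sum
          = (pre.map (cwt v D)).sum + (cwt v D u + (q2.map (cwt v D)).sum) := by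
        rw [hq]; simp
      have hpots : pot v D st = (st.queue.map (cwt v D)).sum := by
        unfold pot; rw [hp]; simp
      have : pd.length + (q2.map (cwt v D)).sum ≤ pot v D st := by
        rw [hpots, hqsum]; omega
      first
      | (refine le_trans ?_ h.hpot; unfold pot; simp only []; omega)
      | (unfold pot; simp only []; omega)
    }

include hn1 hn2 hn3 in
lemma inv_step {st : ESt Vt} (h : Inv G v D st) (b : Bool) : Inv G v D (stepB nbs st b) := by
  obtain ⟨h1, _⟩ := inv_nstate hn1 hn2 hn3 h
  cases hpe : (nstate nbs st).pend with
  | nil => rw [stepB_dead nbs st b hpe]; exact h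
  | cons e rest =>
    obtain ⟨u, w⟩ := e
    have hmem : (u, w) ∈ (nstate nbs st).pend := by rw [hpe]; exact List.mem_cons_self
    have hadj : G.Adj u w := h1.hpadj _ hmem
    obtain ⟨huseen, hunq, hwseen⟩ := h1.hpseen _ hmem
    have hrest_sub : ∀ e' ∈ rest, e' ∈ (nstate nbs st).pend := fun e' he' => by
      rw [hpe]; exact List.mem_cons_of_mem _ he'
    have hrest_fst : ∀ e' ∈ rest, e'.1 = u := fun e' he' =>
      h1.hpsame _ (hrest_sub e' he') _ hmem
    have hsnd := h1.hpnd
    rw [hpe] at hsnd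
    simp only [List.map_cons, List.nodup_cons] at hsnd
    obtain ⟨hwrest, hrestnd⟩ := hsnd
    have hwv : w ≠ v := fun hc => hwseen (hc ▸ h1.hvseen)
    have hrest2 : ∀ e' ∈ rest, e'.2 ≠ w := fun e' he' hc =>
      hwrest (hc ▸ List.mem_map_of_mem (f := Prod.snd) he')
    have hnewedge : ∀ e' ∈ rest, Sym2.mk u w ≠ Sym2.mk e'.1 e'.2 := by
      intro e' he' hc
      rcases (Sym2.mk_eq_mk_iff (p := (u, w)) (q := e')).mp hc with h' | h'
      · exact hrest2 e' he' (congrArg Prod.snd h').symm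
      · have : w = e'.1 := congrArg Prod.snd h'
        have he2 : e'.2 = u := (congrArg Prod.fst h').symm
        exact (h1.hpseen e' (hrest_sub e' he')).2.2 (he2 ▸ huseen)
    have hlognew : ∀ x ∈ (nstate nbs st).log, Sym2.mk x.1.1 x.1.2 ≠ Sym2.mk u w :=
      fun x hx => h1.hlp x hx (u, w) hmem
    have hpotst1 : (nstate nbs st).log.length
        + ((rest.length + 1) + ((nstate nbs st).queue.map (cwt v D)).sum)
        ≤ D + (D - 1) * (((nstate nbs st).log.map Prod.snd).count true) := by
      have h2 := h1.hpot; unfold pot at h2; rw [hpe] at h2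
      simp only [List.length_cons] at h2; omega
    rw [stepB_alive nbs st b u w rest hpe]
    cases b with
    | false =>
      rw [if_neg (by simp)]
      refine ⟨h1.hvseen, h1.hqnd, h1.hqseen, h1.hqsrc,
        fun e' he' => h1.hpadj e' (hrest_sub e' he'),
        fun e' he' => h1.hpseen e' (hrest_sub e' he'),
        fun e' he' e'' he'' => h1.hpsame e' (hrest_sub e' he') e'' (hrest_sub e'' he''),
        hrestnd, ?_, ?_, ?_, ?_, ?_, ?_⟩
      · intro x hx
        rcases List.mem_append.mp hx with hx | hx
        · exact h1.hladj x hx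
        · simp only [List.mem_singleton] at hx; subst hx; exact hadj
      · intro x hx
        rcases List.mem_append.mp hx with hx | hx
        · exact h1.hlseen x hx
        · simp only [List.mem_singleton] at hx; subst hx; exact ⟨huseen, hunq⟩
      · rw [List.map_append, List.nodup_append]
        refine ⟨h1.hlnd, by simp, ?_⟩
        intro a ha b hb hab
        subst hab
        simp only [List.map_cons, List.map_nil, List.mem_singleton] at hb
        rcases List.mem_map.mp ha with ⟨x, hx, rfl⟩
        exact hlognew x hx hb
      · intro x hx e' he'
        rcases List.mem_append.mp hx with hx | hx
        · exact h1.hlp x hx e' (hrest_sub e' he')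
        · simp only [List.mem_singleton] at hx; subst hx
          exact hnewedge e' he'
      · rw [List.map_append, List.count_append]
        simpa using h1.hcard
      · unfold pot
        dsimp only
        simp only [List.map_append, List.count_append, List.length_append]
        have hc0 : List.count true (List.map Prod.snd [((u, w), false)]) = 0 := by simp
        rw [hc0]
        simp only [List.length_singleton, Nat.add_zero]
        omega
    | true =>
      rw [if_pos rfl]
      have hwq : w ∉ (nstate nbs st).queue := fun hc => hwseen (h1.hqseen w hc)
      refine ⟨Finset.mem_insert_of_mem h1.hvseen, ?_, ?_, ?_,
        fun e' he' => h1.hpadj e' (hrest_sub e' he'), ?_,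
        fun e' he' e'' he'' => h1.hpsame e' (hrest_sub e' he') e'' (hrest_sub e'' he''),
        hrestnd, ?_, ?_, ?_, ?_, ?_, ?_⟩
      · rw [List.nodup_append]
        exact ⟨h1.hqnd, by simp, by intro a ha b hb hab; simp at hb; exact hwq (by rw [← hb, ← hab]; exact ha)⟩
      · intro x hx
        rcases List.mem_append.mp hx with hx | hx
        · exact Finset.mem_insert_of_mem (h1.hqseen x hx)
        · simp only [List.mem_singleton] at hx; subst hx; exact Finset.mem_insert_self _ _
      · intro x hx
        rcases List.mem_append.mp hx with hx | hx
        · rcases h1.hqsrc x hx with h' | ⟨a, ha, hadj'⟩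
          · exact Or.inl h'
          · exact Or.inr ⟨a, Finset.mem_insert_of_mem ha, hadj'⟩
        · simp only [List.mem_singleton] at hx; subst hx
          exact Or.inr ⟨u, Finset.mem_insert_of_mem huseen, hadj⟩
      · intro e' he'
        obtain ⟨hs1, hs2, hs3⟩ := h1.hpseen e' (hrest_sub e' he')
        refine ⟨Finset.mem_insert_of_mem hs1, ?_, ?_⟩
        · intro hc
          rcases List.mem_append.mp hc with hc | hc
          · exact hs2 hc
          · simp only [List.mem_singleton] at hc
            exact hwseen (hc ▸ hs1)
        · intro hc
          rcases Finset.mem_insert.mp hc with hc | hc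
          · exact hrest2 e' he' hc
          · exact hs3 hc
      · intro x hx
        rcases List.mem_append.mp hx with hx | hx
        · exact h1.hladj x hx
        · simp only [List.mem_singleton] at hx; subst hx; exact hadj
      · intro x hx
        rcases List.mem_append.mp hx with hx | hx
        · obtain ⟨hs1, hs2⟩ := h1.hlseen x hx
          refine ⟨Finset.mem_insert_of_mem hs1, ?_⟩
          intro hc
          rcases List.mem_append.mp hc with hc | hc
          · exact hs2 hc
          · simp only [List.mem_singleton] at hc; exact hwseen (hc ▸ hs1)
        · simp only [List.mem_singleton] at hx; subst hx
          refine ⟨Finset.mem_insert_of_mem huseen, ?_⟩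
          intro hc
          rcases List.mem_append.mp hc with hc | hc
          · exact hunq hc
          · simp only [List.mem_singleton] at hc; exact hwseen (hc ▸ huseen)
      · rw [List.map_append, List.nodup_append]
        refine ⟨h1.hlnd, by simp, ?_⟩
        intro a ha b hb hab
        subst hab
        simp only [List.map_cons, List.map_nil, List.mem_singleton] at hb
        rcases List.mem_map.mp ha with ⟨x, hx, rfl⟩
        exact hlognew x hx hb
      · intro x hx e' he'
        rcases List.mem_append.mp hx with hx | hx
        · exact h1.hlp x hx e' (hrest_sub e' he')
        · simp only [List.mem_singleton] at hx; subst hx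
          exact hnewedge e' he'
      · rw [Finset.card_insert_of_notMem hwseen, List.map_append, List.count_append]
        have hc1 : List.count true (List.map Prod.snd [((u, w), true)]) = 1 := by simp
        rw [hc1]
        have := h1.hcard
        omega
      · have hmul : (D - 1) * (List.count true (List.map Prod.snd (nstate nbs st).log) + 1)
            = (D - 1) * List.count true (List.map Prod.snd (nstate nbs st).log) + (D - 1) := by
          ring
        unfold pot
        dsimp only
        simp [List.count_append, cwt, hwv]
        omega

end Inv
def initSt (v : Vt) : ESt Vt := ⟨[v], {v}, [], []⟩

lemma inv_init (G : SimpleGraph Vt) (v : Vt) (D : ℕ) :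
    Inv G v D (initSt v) := by
  refine ⟨by simp [initSt], by simp [initSt], by simp [initSt], ?_, by simp [initSt],
    by simp [initSt], by simp [initSt], by simp [initSt], by simp [initSt], by simp [initSt],
    by simp [initSt], by simp [initSt], by simp [initSt], ?_⟩
  · intro x hx
    simp only [initSt, List.mem_singleton] at hx
    exact Or.inl hx
  · simp [initSt, pot, cwt]

lemma stepB_log_cases (st : ESt Vt) (b : Bool) :
    (stepB nbs st b).log = st.log ∨ ∃ x, (stepB nbs st b).log = st.log ++ [x] := by
  cases hpe : (nstate nbs st).pend with
  | nil => rw [stepB_dead nbs st b hpe]; exact Or.inl rfl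
  | cons e rest =>
    obtain ⟨u, w⟩ := e
    rw [stepB_alive nbs st b u w rest hpe]
    right
    refine ⟨((u, w), b), ?_⟩
    cases b <;> simp [nstate_log]

lemma stepB_seen_mono (st : ESt Vt) (b : Bool) : st.seen ⊆ (stepB nbs st b).seen := by
  cases hpe : (nstate nbs st).pend with
  | nil => rw [stepB_dead nbs st b hpe]
  | cons e rest =>
    obtain ⟨u, w⟩ := e
    rw [stepB_alive nbs st b u w rest hpe]
    cases b
    · simp [nstate_seen]
    · simp only [if_pos]
      rw [← nstate_seen nbs st]
      intro x hx
      exact Finset.mem_insert_of_mem hx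

lemma runE_seen_mono (s : List Bool) : ∀ st : ESt Vt, st.seen ⊆ (runE nbs st s).seen := by
  induction s with
  | nil => intro st; rw [runE_nil]
  | cons b s ih =>
    intro st
    rw [runE_cons]
    exact (stepB_seen_mono st b).trans (ih _)

lemma runE_log_prefix (s : List Bool) : ∀ st : ESt Vt,
    ∃ t, (runE nbs st s).log = st.log ++ t := by
  induction s with
  | nil => intro st; exact ⟨[], by simp [runE_nil]⟩
  | cons b s ih =>
    intro st
    rw [runE_cons]
    obtain ⟨t, ht⟩ := ih (stepB nbs st b)
    rcases stepB_log_cases st b with h | ⟨x, h⟩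
    · exact ⟨t, by rw [ht, h]⟩
    · exact ⟨[x] ++ t, by rw [ht, h, List.append_assoc]⟩

lemma inv_runE {G : SimpleGraph Vt} {v : Vt} {D : ℕ}
    (hn1 : ∀ u w, w ∈ nbs u ↔ G.Adj u w) (hn2 : ∀ u, (nbs u).Nodup)
    (hn3 : ∀ u, (nbs u).length ≤ D) (s : List Bool) :
    ∀ st : ESt Vt, Inv G v D st → Inv G v D (runE nbs st s) := by
  induction s with
  | nil => intro st h; rwa [runE_nil]
  | cons b s ih =>
    intro st h
    rw [runE_cons]
    exact ih _ (inv_step hn1 hn2 hn3 h b)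

section Omega

open scoped Classical

variable (G : SimpleGraph Vt) (v : Vt)

def ωext (ω : G.edgeSet → Bool) : Vt × Vt → Bool :=
  fun e => if h : G.Adj e.1 e.2 then ω ⟨s(e.1, e.2), G.mem_edgeSet.mpr h⟩ else false

variable (ω : G.edgeSet → Bool)

structure OInv (st : ESt Vt) : Prop where
  oseen : ∀ x ∈ st.seen, (openSubgraph G ω).Reachable v x
  obnd : ∀ a c, G.Adj a c → a ∈ st.seen → c ∉ st.seen →
    (a ∈ st.queue ∨ (a, c) ∈ st.pend ∨ ωext G ω (a, c) = false)
  olog : ∀ x ∈ st.log, ωext G ω x.1 = x.2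

variable {G v ω}

omit [DecidableEq Vt] in
lemma ωext_of_adj {a c : Vt} (h : G.Adj a c) :
    ωext G ω (a, c) = ω ⟨s(a, c), G.mem_edgeSet.mpr h⟩ := dif_pos h

variable {D : ℕ} (hn1 : ∀ u w, w ∈ nbs u ↔ G.Adj u w)

include hn1 in
lemma oinv_nstate {st : ESt Vt} (hI : Inv G v D st) (hO : OInv G v ω st) :
    OInv G v ω (nstate nbs st) := by
  by_cases hp : st.pend = []
  swap
  · rwa [nstate_of_pend_ne nbs st hp]
  rw [nstate_of_pend_eq nbs st hp]
  refine ⟨fun x hx => hO.oseen x hx, ?_, fun x hx => hO.olog x hx⟩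
  intro a c hadj ha hc
  have hfillmem : (a, c) ∈ fill nbs a st.seen :=
    mem_fill.mpr ⟨rfl, (hn1 a c).mpr hadj, hc⟩
  rcases hO.obnd a c hadj ha hc with hq | hpd | hcl
  · rcases norm_spec nbs st.queue st.seen with ⟨e1, e2, hall⟩ | ⟨u, pre, hqeq, hpre, hfill, hne⟩
    · exact absurd hfillmem (by rw [hall a hq]; simp)
    · rw [hqeq] at hq
      rcases List.mem_append.mp hq with hq | hq
      · exact absurd hfillmem (by rw [hpre a hq]; simp)
      · rcases List.mem_cons.mp hq with rfl | hq
        · exact Or.inr (Or.inl (by rw [hfill] at *; exact hfillmem))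
        · exact Or.inl hq
  · exact absurd hpd (by rw [hp]; simp)
  · exact Or.inr (Or.inr hcl)

include hn1 in
lemma oinv_step {st : ESt Vt} (hI : Inv G v D st) (hO : OInv G v ω st)
    (hn2 : ∀ u, (nbs u).Nodup) (hn3 : ∀ u, (nbs u).length ≤ D) :
    OInv G v ω (stepB nbs st (obit nbs (ωext G ω) st)) := by
  obtain ⟨hI1, _⟩ := inv_nstate hn1 hn2 hn3 hI
  have hO1 : OInv G v ω (nstate nbs st) := oinv_nstate hn1 hI hO
  cases hpe : (nstate nbs st).pend with
  | nil => rwa [stepB_dead nbs st _ hpe]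
  | cons e rest =>
    obtain ⟨u, w⟩ := e
    have hb : obit nbs (ωext G ω) st = ωext G ω (u, w) := by
      unfold obit; rw [hpe]
    have hmem : (u, w) ∈ (nstate nbs st).pend := by rw [hpe]; exact List.mem_cons_self
    have hadj : G.Adj u w := hI1.hpadj _ hmem
    obtain ⟨huseen, hunq, hwseen⟩ := hI1.hpseen _ hmem
    rw [hb, stepB_alive nbs st _ u w rest hpe]
    cases hω : ωext G ω (u, w) with
    | false =>
      rw [if_neg (by simp)]
      refine ⟨fun x hx => hO1.oseen x hx, ?_, ?_⟩
      · intro a c hadj' ha hc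
        rcases hO1.obnd a c hadj' ha hc with hq | hpd | hcl
        · exact Or.inl hq
        · rw [hpe] at hpd
          rcases List.mem_cons.mp hpd with heq | hpd
          · rw [heq]; exact Or.inr (Or.inr hω)
          · exact Or.inr (Or.inl hpd)
        · exact Or.inr (Or.inr hcl)
      · intro x hx
        rcases List.mem_append.mp hx with hx | hx
        · exact hO1.olog x hx
        · simp only [List.mem_singleton] at hx; subst hx; exact hω
    | true =>
      rw [if_pos rfl]
      have hreach_w : (openSubgraph G ω).Reachable v w := by
        refine (hO1.oseen u huseen).trans ?_
        refine SimpleGraph.Adj.reachable ?_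
        refine ⟨hadj, ?_⟩
        rw [ωext_of_adj hadj] at hω
        exact hω
      refine ⟨?_, ?_, ?_⟩
      · intro x hx
        rcases Finset.mem_insert.mp hx with rfl | hx
        · exact hreach_w
        · exact hO1.oseen x hx
      · intro a c hadj' ha hc
        have hcs : c ∉ (nstate nbs st).seen := fun h' => hc (Finset.mem_insert_of_mem h')
        rcases Finset.mem_insert.mp ha with rfl | ha
        · exact Or.inl (by simp)
        · rcases hO1.obnd a c hadj' ha hcs with hq | hpd | hcl
          · exact Or.inl (List.mem_append.mpr (Or.inl hq))
          · rw [hpe] at hpd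
            rcases List.mem_cons.mp hpd with heq | hpd
            · exfalso
              have : c = w := congrArg Prod.snd heq
              exact hc (this ▸ Finset.mem_insert_self _ _)
            · exact Or.inr (Or.inl hpd)
          · exact Or.inr (Or.inr hcl)
      · intro x hx
        rcases List.mem_append.mp hx with hx | hx
        · exact hO1.olog x hx
        · simp only [List.mem_singleton] at hx; subst hx; exact hω

include hn1 in
lemma dead_closure {st : ESt Vt} (hI : Inv G v D st) (hO : OInv G v ω st)
    (hdead : (nstate nbs st).pend = []) :
    ∀ x, (openSubgraph G ω).Reachable v x → x ∈ st.seen := by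
  have hp : st.pend = [] := by
    by_contra hc
    rw [nstate_of_pend_ne nbs st hc] at hdead
    exact hc hdead
  have hallempty : ∀ u ∈ st.queue, fill nbs u st.seen = [] := by
    rcases norm_spec nbs st.queue st.seen with ⟨e1, e2, hall⟩ | ⟨u, pre, hqeq, hpre, hfill, hne⟩
    · exact hall
    · exfalso
      rw [nstate_of_pend_eq nbs st hp] at hdead
      simp only at hdead
      exact hne hdead
  have hclosed : ∀ a c, G.Adj a c → a ∈ st.seen → c ∉ st.seen → ωext G ω (a, c) = false := by
    intro a c hadj ha hc
    rcases hO.obnd a c hadj ha hc with hq | hpd | hcl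
    · have hfillmem : (a, c) ∈ fill nbs a st.seen :=
        mem_fill.mpr ⟨rfl, (hn1 a c).mpr hadj, hc⟩
      exact absurd hfillmem (by rw [hallempty a hq]; simp)
    · exact absurd hpd (by rw [hp]; simp)
    · exact hcl
  have key : ∀ (a b : Vt) (wk : (openSubgraph G ω).Walk a b), a ∈ st.seen → b ∈ st.seen := by
    intro a b wk
    induction wk with
    | nil => exact id
    | @cons x y z h p ih =>
      intro hx
      refine ih ?_
      by_cases hy : y ∈ st.seen
      · exact hy
      · exfalso
        obtain ⟨hGadj, hopen⟩ := h
        have hcl := hclosed x y hGadj hx hy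
        rw [ωext_of_adj hGadj] at hcl
        rw [hcl] at hopen
        exact Bool.false_ne_true hopen
  intro x hr
  obtain ⟨wlk⟩ := hr
  exact key v x wlk hI.hvseen

include hn1 in
lemma main_run (hn2 : ∀ u, (nbs u).Nodup) (hn3 : ∀ u, (nbs u).length ≤ D) (k : ℕ) :
    ∀ st, Inv G v D st → OInv G v ω st →
    Inv G v D (runE nbs st (trn nbs (ωext G ω) st k)) ∧
    OInv G v ω (runE nbs st (trn nbs (ωext G ω) st k)) ∧
    ((runE nbs st (trn nbs (ωext G ω) st k)).log.length = st.log.length + k ∨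
      ∀ x, (openSubgraph G ω).Reachable v x →
        x ∈ (runE nbs st (trn nbs (ωext G ω) st k)).seen) := by
  induction k with
  | zero =>
    intro st hI hO
    exact ⟨hI, hO, Or.inl (by simp [trn, runE_nil])⟩
  | succ k ih =>
    intro st hI hO
    have hstep : runE nbs st (trn nbs (ωext G ω) st (k+1))
        = runE nbs (stepB nbs st (obit nbs (ωext G ω) st))
            (trn nbs (ωext G ω) (stepB nbs st (obit nbs (ωext G ω) st)) k) := rfl
    by_cases hdead : (nstate nbs st).pend = []
    · have hfix : stepB nbs st (obit nbs (ωext G ω) st) = st := stepB_dead _ _ _ hdead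
      rw [hstep, hfix]
      obtain ⟨hI', hO', _⟩ := ih st hI hO
      refine ⟨hI', hO', Or.inr ?_⟩
      intro x hr
      exact runE_seen_mono _ _ (dead_closure hn1 hI hO hdead x hr)
    · have hI2 := inv_step hn1 hn2 hn3 hI (obit nbs (ωext G ω) st)
      have hO2 := oinv_step hn1 hI hO hn2 hn3
      obtain ⟨hI', hO', hcase⟩ := ih _ hI2 hO2
      refine ⟨by rw [hstep]; exact hI', by rw [hstep]; exact hO', ?_⟩
      rcases hcase with hlen | hcl
      · left
        rw [hstep, hlen]
        have hlog1 : (stepB nbs st (obit nbs (ωext G ω) st)).log.length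
            = st.log.length + 1 := by
          cases hpe : (nstate nbs st).pend with
          | nil => exact absurd hpe hdead
          | cons e rest =>
            obtain ⟨u, w⟩ := e
            rw [stepB_alive nbs st _ u w rest hpe]
            cases obit nbs (ωext G ω) st <;> simp [nstate_log]
        omega
      · right; rw [hstep]; exact hcl

lemma oinv_init : OInv G v ω (initSt v) := by
  refine ⟨?_, ?_, by simp [initSt]⟩
  · intro x hx
    simp only [initSt, Finset.mem_singleton] at hx
    subst hx
    exact SimpleGraph.Reachable.refl _
  · intro a c hadj ha hc
    simp only [initSt, Finset.mem_singleton] at ha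
    subst ha
    exact Or.inl (by simp [initSt])

include hn1 in
lemma final_count (hn2 : ∀ u, (nbs u).Nodup) (hn3 : ∀ u, (nbs u).length ≤ D)
    (hD2 : 2 ≤ D) (n : ℕ)
    (hev : (n : ℕ∞) ≤ ((openSubgraph G ω).connectedComponentMk v).supp.encard) :
    n - 1 ≤ ((runE nbs (initSt v)
        (trn nbs (ωext G ω) (initSt v) ((D-1)*(n-1) + D))).log.map Prod.snd).count true := by
  set m := (D-1)*(n-1) + D with hm
  obtain ⟨hI', hO', hcase⟩ :=
    main_run hn1 hn2 hn3 m (initSt v) (inv_init G v D) oinv_init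
  set fin := runE nbs (initSt v) (trn nbs (ωext G ω) (initSt v) m) with hfin
  rcases hcase with hlen | hcl
  · have hpot := hI'.hpot
    have hlog0 : (initSt v).log.length = 0 := rfl
    rw [hlen, hlog0] at hpot
    have h1 : m ≤ D + (D - 1) * ((fin.log.map Prod.snd).count true) := by
      refine le_trans ?_ hpot
      omega
    have h2 : (D-1) * (n-1) ≤ (D-1) * ((fin.log.map Prod.snd).count true) := by omega
    exact Nat.le_of_mul_le_mul_left h2 (by omega)
  · have hsub : ((openSubgraph G ω).connectedComponentMk v).supp ⊆ ↑fin.seen := by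
      intro x hx
      rw [SimpleGraph.ConnectedComponent.mem_supp_iff] at hx
      have hreach : (openSubgraph G ω).Reachable v x :=
        (SimpleGraph.ConnectedComponent.eq.mp hx).symm
      exact hcl x hreach
    have hpush : (n : ℕ∞) ≤ (fin.seen.card : ℕ∞) := by
      refine le_trans hev ?_
      refine le_trans (Set.encard_mono hsub) ?_
      rw [Set.encard_coe_eq_coe_finsetCard]
    have hn : n ≤ fin.seen.card := by exact_mod_cast hpush
    have := hI'.hcard
    omega

end Omega

section Weights

variable (uw : Bool → ℝ≥0∞)

lemma gval_nil (st : ESt Vt) : gval nbs uw st [] = 1 := rfl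

lemma gval_cons_dead (st : ESt Vt) (b : Bool) (s : List Bool)
    (h : (nstate nbs st).pend = []) :
    gval nbs uw st (b :: s) = if b then 0 else gval nbs uw st s := by
  conv_lhs => rw [gval]
  rw [h]

lemma gval_cons_alive (st : ESt Vt) (b : Bool) (s : List Bool) (e : Vt × Vt)
    (rest : List (Vt × Vt)) (h : (nstate nbs st).pend = e :: rest) :
    gval nbs uw st (b :: s) = uw b * gval nbs uw (stepB nbs st b) s := by
  conv_lhs => rw [gval]
  rw [h]

lemma allowed_cons (st : ESt Vt) (b : Bool) (s : List Bool) :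
    Allowed nbs st (b :: s) ↔
      (((nstate nbs st).pend = []) → b = false) ∧ Allowed nbs (stepB nbs st b) s := Iff.rfl

lemma trn_zero (ωf : Vt × Vt → Bool) (st : ESt Vt) : trn nbs ωf st 0 = [] := rfl

lemma trn_succ (ωf : Vt × Vt → Bool) (st : ESt Vt) (k : ℕ) :
    trn nbs ωf st (k+1) = obit nbs ωf st :: trn nbs ωf (stepB nbs st (obit nbs ωf st)) k := rfl

lemma trn_length (ωf : Vt × Vt → Bool) (k : ℕ) :
    ∀ st : ESt Vt, (trn nbs ωf st k).length = k := by
  induction k with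
  | zero => intro st; rfl
  | succ k ih => intro st; rw [trn_succ, List.length_cons, ih]

lemma allowed_trn (ωf : Vt × Vt → Bool) (k : ℕ) :
    ∀ st : ESt Vt, Allowed nbs st (trn nbs ωf st k) := by
  induction k with
  | zero => intro st; trivial
  | succ k ih =>
    intro st
    rw [trn_succ, allowed_cons]
    refine ⟨fun hdead => ?_, ih _⟩
    unfold obit; rw [hdead]

lemma gval_run_eq : ∀ (s : List Bool) (st : ESt Vt), Allowed nbs st s →
    (st.log.map (fun x => uw x.2)).prod * gval nbs uw st s
      = ((runE nbs st s).log.map (fun x => uw x.2)).prod := by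
  intro s
  induction s with
  | nil => intro st _; rw [gval_nil, runE_nil, mul_one]
  | cons b s ih =>
    intro st hA
    rw [allowed_cons] at hA
    obtain ⟨h1, h2⟩ := hA
    rw [runE_cons]
    cases hpe : (nstate nbs st).pend with
    | nil =>
      have hb : b = false := h1 hpe
      subst hb
      have hfix : stepB nbs st false = st := stepB_dead nbs st false hpe
      rw [gval_cons_dead uw st false s hpe, if_neg (by simp), hfix]
      rw [hfix] at h2
      exact ih st h2
    | cons e rest =>
      obtain ⟨u, w⟩ := e
      have hlog : (stepB nbs st b).log = st.log ++ [((u, w), b)] := by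
        rw [stepB_alive nbs st b u w rest hpe]
        cases b <;> simp [nstate_log]
      rw [gval_cons_alive uw st b s (u, w) rest hpe, ← mul_assoc]
      have : (st.log.map (fun x => uw x.2)).prod * uw b
          = ((stepB nbs st b).log.map (fun x => uw x.2)).prod := by
        rw [hlog, List.map_append, List.prod_append]
        simp
      rw [this]
      exact ih _ h2

lemma gval_sum_le (hZ : 1 ≤ uw true + uw false) (k : ℕ) :
    ∀ st : ESt Vt, ∑ sf : Fin k → Bool, gval nbs uw st (List.ofFn sf)
      ≤ (uw true + uw false) ^ k := by
  induction k with
  | zero =>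
    intro st
    rw [pow_zero]
    have : ∀ sf : Fin 0 → Bool, gval nbs uw st (List.ofFn sf) = 1 := by
      intro sf; rw [List.ofFn_zero, gval_nil]
    rw [Finset.sum_congr rfl (fun sf _ => this sf)]
    simp
  | succ k ih =>
    intro st
    have hcons : ∀ (b : Bool) (sf : Fin k → Bool),
        List.ofFn ((Fin.consEquiv (fun _ : Fin (k+1) => Bool)) (b, sf)) = b :: List.ofFn sf := by
      intro b sf
      simp [List.ofFn_succ]
    have hsum : ∑ sf : Fin (k+1) → Bool, gval nbs uw st (List.ofFn sf)
        = ∑ b : Bool, ∑ sf : Fin k → Bool, gval nbs uw st (b :: List.ofFn sf) := by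
      rw [← Equiv.sum_comp (Fin.consEquiv (fun _ : Fin (k+1) => Bool))
        (fun sf => gval nbs uw st (List.ofFn sf)), Fintype.sum_prod_type]
      exact Finset.sum_congr rfl fun b _ => Finset.sum_congr rfl fun sf _ => by rw [hcons]
    rw [hsum]
    cases hpe : (nstate nbs st).pend with
    | nil =>
      have heval : ∀ b : Bool, ∀ sf : Fin k → Bool,
          gval nbs uw st (b :: List.ofFn sf) = if b then 0 else gval nbs uw st (List.ofFn sf) :=
        fun b sf => gval_cons_dead uw st b _ hpe
      rw [Fintype.sum_bool]
      simp only [heval, if_pos, if_neg]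
      simp only [Finset.sum_const_zero, zero_add]
      calc ∑ sf : Fin k → Bool, gval nbs uw st (List.ofFn sf)
          ≤ (uw true + uw false) ^ k := ih st
        _ ≤ (uw true + uw false) ^ (k+1) := by
            rw [pow_succ]
            nth_rewrite 1 [← mul_one ((uw true + uw false) ^ k)]
            exact mul_le_mul_right hZ _
    | cons e rest =>
      have heval : ∀ b : Bool, ∀ sf : Fin k → Bool,
          gval nbs uw st (b :: List.ofFn sf)
            = uw b * gval nbs uw (stepB nbs st b) (List.ofFn sf) :=
        fun b sf => gval_cons_alive uw st b _ e rest hpe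
      calc ∑ b : Bool, ∑ sf : Fin k → Bool, gval nbs uw st (b :: List.ofFn sf)
          = ∑ b : Bool, uw b * ∑ sf : Fin k → Bool, gval nbs uw (stepB nbs st b) (List.ofFn sf) := by
            refine Finset.sum_congr rfl (fun b _ => ?_)
            rw [Finset.mul_sum]
            exact Finset.sum_congr rfl (fun sf _ => heval b sf)
        _ ≤ ∑ b : Bool, uw b * (uw true + uw false) ^ k := by
            refine Finset.sum_le_sum (fun b _ => ?_)
            exact mul_le_mul_right (ih _) _
        _ = (uw true + uw false) ^ (k+1) := by
            rw [Fintype.sum_bool, pow_succ]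
            ring

end Weights

def wweight (p : ℝ) (b : Bool) : ℝ≥0∞ :=
  if b = true then ENNReal.ofReal p else ENNReal.ofReal (1 - p)

def uweight (p θ : ℝ) (b : Bool) : ℝ≥0∞ :=
  if b = true then ENNReal.ofReal (p * Real.exp θ) else ENNReal.ofReal (1 - p)

omit [DecidableEq Vt] in
lemma prod_uweight (p θ : ℝ) (hp0 : 0 ≤ p) : ∀ L : List ((Vt × Vt) × Bool),
    (L.map (fun x => uweight p θ x.2)).prod
      = (L.map (fun x => wweight p x.2)).prod
        * (ENNReal.ofReal (Real.exp θ)) ^ ((L.map Prod.snd).count true) := by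
  intro L
  induction L with
  | nil => simp
  | cons x L ih =>
    simp only [List.map_cons, List.prod_cons, List.count_cons]
    rw [ih]
    cases hb : x.2 with
    | false =>
      simp only [uweight, wweight, hb]
      norm_num
      ring
    | true =>
      simp only [uweight, wweight, hb]
      norm_num
      rw [ENNReal.ofReal_mul hp0, pow_succ]
      ring

omit [DecidableEq Vt] in
lemma ofFn_cast_eq (l : List Bool) (m : ℕ) (h : l.length = m) :
    List.ofFn (fun i : Fin m => l.get (Fin.cast h.symm i)) = l := by
  subst h
  simp [List.ofFn_getElem]

section Cylinder

open scoped Classical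

variable (G : SimpleGraph Vt)

def edgeOf {L : List ((Vt × Vt) × Bool)} (hadj : ∀ x ∈ L, G.Adj x.1.1 x.1.2) :
    List G.edgeSet :=
  L.attach.map (fun x => ⟨Sym2.mk x.1.1.1 x.1.1.2, G.mem_edgeSet.mpr (hadj x.1 x.2)⟩)

def sigOf (L : List ((Vt × Vt) × Bool)) : G.edgeSet → Bool :=
  fun e => if (∃ x ∈ L, Sym2.mk x.1.1 x.1.2 = (e : Sym2 Vt) ∧ x.2 = true) then true else false

lemma mem_edgeOf {L : List ((Vt × Vt) × Bool)} (hadj : ∀ x ∈ L, G.Adj x.1.1 x.1.2)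
    (e : G.edgeSet) :
    e ∈ edgeOf G hadj ↔ ∃ x ∈ L, (e : Sym2 Vt) = Sym2.mk x.1.1 x.1.2 := by
  unfold edgeOf
  simp only [List.mem_map, List.mem_attach, true_and]
  constructor
  · rintro ⟨x, hx⟩
    exact ⟨x.1, x.2, by rw [← hx]⟩
  · rintro ⟨x, hxL, hval⟩
    exact ⟨⟨x, hxL⟩, Subtype.ext hval.symm⟩

lemma edgeOf_nodup {L : List ((Vt × Vt) × Bool)} (hadj : ∀ x ∈ L, G.Adj x.1.1 x.1.2)
    (hnd : (L.map (fun x => Sym2.mk x.1.1 x.1.2)).Nodup) : (edgeOf G hadj).Nodup := by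
  have hval : (edgeOf G hadj).map Subtype.val = L.map (fun x => Sym2.mk x.1.1 x.1.2) := by
    unfold edgeOf
    rw [List.map_map]
    exact List.attach_map_val (l := L) (f := fun a => Sym2.mk a.1.1 a.1.2)
  refine List.Nodup.of_map Subtype.val ?_
  rw [hval]
  exact hnd

lemma sigOf_spec {L : List ((Vt × Vt) × Bool)} (hnd : (L.map (fun x => Sym2.mk x.1.1 x.1.2)).Nodup)
    (x : (Vt × Vt) × Bool) (hx : x ∈ L) (e : G.edgeSet) (he : (e : Sym2 Vt) = Sym2.mk x.1.1 x.1.2) :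
    sigOf G L e = x.2 := by
  unfold sigOf
  cases hb : x.2 with
  | true => rw [if_pos ⟨x, hx, he.symm, hb⟩]
  | false =>
    rw [if_neg]
    rintro ⟨y, hy, hy2, hy3⟩
    have : y = x := List.inj_on_of_nodup_map hnd hy hx (by rw [hy2]; exact he)
    rw [this] at hy3
    rw [hy3] at hb
    exact Bool.noConfusion hb

lemma prod_sig (p : ℝ) {L : List ((Vt × Vt) × Bool)} (hadj : ∀ x ∈ L, G.Adj x.1.1 x.1.2)
    (hnd : (L.map (fun x => Sym2.mk x.1.1 x.1.2)).Nodup) :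
    ∏ e ∈ (edgeOf G hadj).toFinset, wweight p (sigOf G L e)
      = (L.map (fun x => wweight p x.2)).prod := by
  rw [List.prod_toFinset _ (edgeOf_nodup G hadj hnd)]
  unfold edgeOf
  rw [List.map_map]
  have hcong : ∀ x : {a // a ∈ L},
      ((fun e => wweight p (sigOf G L e)) ∘
        (fun x : {a // a ∈ L} => (⟨Sym2.mk x.1.1.1 x.1.1.2, G.mem_edgeSet.mpr (hadj x.1 x.2)⟩ : G.edgeSet))) x
      = wweight p x.1.2 := by
    intro x
    exact congrArg (wweight p) (sigOf_spec G hnd x.1 x.2 _ rfl)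
  rw [List.map_congr_left (fun x _ => hcong x)]
  exact congrArg List.prod (List.attach_map_val (l := L) (f := fun a => wweight p a.2))

lemma cyl_measure {p : ℝ} (ℙ : Measure (G.edgeSet → Bool)) (hBer : IsBernoulliPercolation G ℙ p)
    {L : List ((Vt × Vt) × Bool)} (hadj : ∀ x ∈ L, G.Adj x.1.1 x.1.2)
    (hnd : (L.map (fun x => Sym2.mk x.1.1 x.1.2)).Nodup) :
    ℙ {ω' | ∀ e ∈ (edgeOf G hadj).toFinset, ω' e = sigOf G L e}
      = (L.map (fun x => wweight p x.2)).prod := by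
  rw [hBer ((edgeOf G hadj).toFinset) (sigOf G L)]
  calc ∏ e ∈ (edgeOf G hadj).toFinset,
        (if sigOf G L e = true then ENNReal.ofReal p else ENNReal.ofReal (1 - p))
      = ∏ e ∈ (edgeOf G hadj).toFinset, wweight p (sigOf G L e) := rfl
    _ = _ := prod_sig G p hadj hnd

end Cylinder

section Main

open scoped Classical

variable {G : SimpleGraph Vt} {v : Vt} {D : ℕ}

lemma measure_event_le (hn1 : ∀ u w, w ∈ nbs u ↔ G.Adj u w) (hn2 : ∀ u, (nbs u).Nodup)
    (hn3 : ∀ u, (nbs u).length ≤ D) (hD2 : 2 ≤ D) {p θ : ℝ} (hp0 : 0 ≤ p) (hθ : 0 ≤ θ)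
    (ℙ : Measure (G.edgeSet → Bool)) (hBer : IsBernoulliPercolation G ℙ p) (n : ℕ) :
    ℙ {ω | (n : ℕ∞) ≤ ((openSubgraph G ω).connectedComponentMk v).supp.encard}
        * (ENNReal.ofReal (Real.exp θ)) ^ (n - 1)
      ≤ (ENNReal.ofReal (p * Real.exp θ) + ENNReal.ofReal (1 - p)) ^ ((D-1)*(n-1) + D) := by
  set m := (D-1)*(n-1) + D with hm
  have hInv : ∀ s : List Bool, Inv G v D (runE nbs (initSt v) s) :=
    fun s => inv_runE hn1 hn2 hn3 s _ (inv_init G v D)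
  have hadjlog : ∀ s : List Bool, ∀ x ∈ (runE nbs (initSt v) s).log, G.Adj x.1.1 x.1.2 :=
    fun s => (hInv s).hladj
  have hndlog : ∀ s : List Bool,
      ((runE nbs (initSt v) s).log.map (fun x => Sym2.mk x.1.1 x.1.2)).Nodup :=
    fun s => (hInv s).hlnd
  set S : Finset (Fin m → Bool) := Finset.univ.filter (fun sf =>
    Allowed nbs (initSt v) (List.ofFn sf) ∧
      n - 1 ≤ (((runE nbs (initSt v) (List.ofFn sf)).log.map Prod.snd).count true)) with hS
  set A : (Fin m → Bool) → Set (G.edgeSet → Bool) := fun sf =>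
    {ω' | ∀ e ∈ (edgeOf G (hadjlog (List.ofFn sf))).toFinset,
        ω' e = sigOf G (runE nbs (initSt v) (List.ofFn sf)).log e} with hA
  have hcover : {ω | (n : ℕ∞) ≤ ((openSubgraph G ω).connectedComponentMk v).supp.encard}
      ⊆ ⋃ sf ∈ S, A sf := by
    intro ω hω
    have hlen : (trn nbs (ωext G ω) (initSt v) m).length = m := trn_length (ωext G ω) m (initSt v)
    set sf : Fin m → Bool :=
      fun i => (trn nbs (ωext G ω) (initSt v) m).get (Fin.cast hlen.symm i) with hsf
    have hofn : List.ofFn sf = trn nbs (ωext G ω) (initSt v) m := ofFn_cast_eq _ m hlen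
    have hmem : sf ∈ S := by
      rw [hS, Finset.mem_filter]
      refine ⟨Finset.mem_univ _, ?_, ?_⟩
      · rw [hofn]; exact allowed_trn (ωext G ω) m (initSt v)
      · rw [hofn]
        exact final_count hn1 hn2 hn3 hD2 n hω
    refine Set.mem_biUnion hmem ?_
    rw [hA]
    simp only [Set.mem_setOf_eq]
    obtain ⟨hIfin, hOfin, -⟩ :=
      main_run (ω := ω) hn1 hn2 hn3 m (initSt v) (inv_init G v D) oinv_init
    rw [← hofn] at hOfin
    intro e he
    rw [List.mem_toFinset, mem_edgeOf] at he
    obtain ⟨x, hxL, hval⟩ := he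
    rw [sigOf_spec G (hndlog (List.ofFn sf)) x hxL e hval]
    have hωx : ωext G ω x.1 = x.2 := hOfin.olog x hxL
    have hadjx := hadjlog (List.ofFn sf) x hxL
    have he2 : e = ⟨s(x.1.1, x.1.2), G.mem_edgeSet.mpr hadjx⟩ := Subtype.ext (by rw [hval])
    rw [he2, ← ωext_of_adj (ω := ω) hadjx]
    exact hωx
  have heθ : (1:ℝ≥0∞) ≤ ENNReal.ofReal (Real.exp θ) :=
    ENNReal.one_le_ofReal.mpr (Real.one_le_exp hθ)
  have hZ : (1:ℝ≥0∞) ≤ uweight p θ true + uweight p θ false := by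
    calc (1:ℝ≥0∞) = ENNReal.ofReal (p + (1-p)) := by norm_num
      _ ≤ ENNReal.ofReal p + ENNReal.ofReal (1-p) := ENNReal.ofReal_add_le
      _ ≤ ENNReal.ofReal (p * Real.exp θ) + ENNReal.ofReal (1-p) := by
          refine add_le_add_left (ENNReal.ofReal_le_ofReal ?_) _
          nlinarith [Real.one_le_exp hθ]
      _ = uweight p θ true + uweight p θ false := by simp [uweight]
  have hterm : ∀ sf ∈ S, ℙ (A sf) * (ENNReal.ofReal (Real.exp θ)) ^ (n-1)
      ≤ gval nbs (uweight p θ) (initSt v) (List.ofFn sf) := by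
    intro sf hsf
    rw [hS, Finset.mem_filter] at hsf
    obtain ⟨-, hAl, hcnt⟩ := hsf
    have hmeas : ℙ (A sf)
        = ((runE nbs (initSt v) (List.ofFn sf)).log.map (fun x => wweight p x.2)).prod := by
      rw [hA]
      exact cyl_measure G ℙ hBer (hadjlog _) (hndlog _)
    have hg : gval nbs (uweight p θ) (initSt v) (List.ofFn sf)
        = ((runE nbs (initSt v) (List.ofFn sf)).log.map (fun x => uweight p θ x.2)).prod := by
      have h0 := gval_run_eq (uweight p θ) (List.ofFn sf) (initSt v) hAl
      have h1 : (((initSt v) : ESt Vt).log.map (fun x => uweight p θ x.2)).prod = 1 := by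
        simp [initSt]
      rw [h1, one_mul] at h0
      exact h0
    rw [hmeas, hg, prod_uweight p θ hp0]
    refine mul_le_mul_right ?_ _
    exact pow_le_pow_right' heθ hcnt
  calc ℙ {ω | (n : ℕ∞) ≤ ((openSubgraph G ω).connectedComponentMk v).supp.encard}
        * (ENNReal.ofReal (Real.exp θ)) ^ (n - 1)
      ≤ ℙ (⋃ sf ∈ S, A sf) * (ENNReal.ofReal (Real.exp θ)) ^ (n - 1) :=
        mul_le_mul_left (measure_mono hcover) _
    _ ≤ (∑ sf ∈ S, ℙ (A sf)) * (ENNReal.ofReal (Real.exp θ)) ^ (n - 1) :=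
        mul_le_mul_left (measure_biUnion_finset_le S A) _
    _ = ∑ sf ∈ S, ℙ (A sf) * (ENNReal.ofReal (Real.exp θ)) ^ (n - 1) := by rw [Finset.sum_mul]
    _ ≤ ∑ sf ∈ S, gval nbs (uweight p θ) (initSt v) (List.ofFn sf) := Finset.sum_le_sum hterm
    _ ≤ ∑ sf : Fin m → Bool, gval nbs (uweight p θ) (initSt v) (List.ofFn sf) :=
        Finset.sum_le_sum_of_subset (by rw [hS]; exact Finset.filter_subset _ _)
    _ ≤ (uweight p θ true + uweight p θ false) ^ m := gval_sum_le (uweight p θ) hZ m _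
    _ = (ENNReal.ofReal (p * Real.exp θ) + ENNReal.ofReal (1 - p)) ^ m := by simp [uweight]

end Main

end ClusterDecay

set_option maxHeartbeats 1000000

/-- Fix `d ∈ ℕ`, `r > 0`, `D ≥ 2`, `l_max ∈ (0,∞)` and `p ∈ [0, 1/(D−1))`.
Then there exists a constant `λ(p) ∈ (0,∞)` such that, uniformly over all simple graphs
`G = (V,E)` with `V ⊆ ℝ^d` uniformly discrete of radius `r`, all degrees at most `D` and all
edges of length at most `l_max`, and uniformly over all `v ∈ V` and `n ≥ 1`, one has
`ℙ_p(|C_v| ≥ n) ≤ 2·exp(−n λ(p))`. -/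
theorem cluster_size_distribution_uniform_exponential_decay
    (d : ℕ) (r : ℝ) (hr : 0 < r) (D : ℕ) (hD : 2 ≤ D) (l_max : ℝ) (hl : 0 < l_max)
    (p : ℝ) (hp0 : 0 ≤ p) (hp : p < 1 / ((D : ℝ) - 1)) :
    ∃ lam : ℝ, 0 < lam ∧
      ∀ (V : Set (EuclideanSpace ℝ (Fin d))) (G : SimpleGraph V),
        V.Countable →
        (∀ x : EuclideanSpace ℝ (Fin d),
          Set.Subsingleton {y : EuclideanSpace ℝ (Fin d) | y ∈ V ∧ dist y x < r}) →
        (∀ v : V, (G.neighborSet v).Finite ∧ (G.neighborSet v).ncard ≤ D) →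
        (∀ u w : V, G.Adj u w → dist u w ≤ l_max) →
        ∀ (ℙ : Measure (G.edgeSet → Bool)), IsProbabilityMeasure ℙ →
          IsBernoulliPercolation G ℙ p →
          ∀ (v : V) (n : ℕ), 1 ≤ n →
            ℙ {ω | (n : ℕ∞) ≤ ((openSubgraph G ω).connectedComponentMk v).supp.encard}
              ≤ ENNReal.ofReal (2 * Real.exp (-(n : ℝ) * lam)) := by
  classical
  have hD1 : (1:ℝ) ≤ (D:ℝ) - 1 := by
    have : (2:ℝ) ≤ (D:ℝ) := by exact_mod_cast hD
    linarith
  have hp1 : p < 1 := lt_of_lt_of_le hp (by rw [div_le_one (by linarith)]; linarith)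
  set q := p * ((D:ℝ) - 1) with hq
  have hq0 : 0 ≤ q := mul_nonneg hp0 (by linarith)
  have hq1 : q < 1 := by
    have := (lt_div_iff₀ (by linarith : (0:ℝ) < (D:ℝ) - 1)).mp hp
    linarith
  set ε := min ((1 - q)/2) (1/4 : ℝ) with hε
  have hε0 : 0 < ε := lt_min (by linarith) (by norm_num)
  have hε14 : ε ≤ 1/4 := min_le_right _ _
  have hεq : ε ≤ (1-q)/2 := min_le_left _ _
  set θ := Real.log (1 + ε) with hθdef
  have h1ε : (0:ℝ) < 1 + ε := by linarith
  have hθ0 : 0 < θ := Real.log_pos (by linarith)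
  have hθε : θ ≤ ε := by
    have := Real.log_le_sub_one_of_pos h1ε
    linarith
  have hθlow : ε/(1+ε) ≤ θ := by
    have h2 := Real.log_le_sub_one_of_pos (show (0:ℝ) < (1+ε)⁻¹ by positivity)
    rw [Real.log_inv] at h2
    have h3 : 1 - (1+ε)⁻¹ = ε/(1+ε) := by field_simp; ring
    linarith
  set Z := p * Real.exp θ + (1 - p) with hZdef
  have hexp : Real.exp θ = 1 + ε := Real.exp_log h1ε
  have hZval : Z = 1 + p * ε := by rw [hZdef, hexp]; ring
  have hZpos : 0 < Z := by rw [hZval]; nlinarith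
  have hlogZ : Real.log Z ≤ p * ε := by
    have h := Real.log_le_sub_one_of_pos hZpos
    rw [hZval] at h ⊢
    linarith
  have hlogZ0 : 0 ≤ Real.log Z := Real.log_nonneg (by rw [hZval]; nlinarith)
  set a := θ - ((D:ℝ) - 1) * Real.log Z with hadef
  have hinv : 1 - ε ≤ (1+ε)⁻¹ := by
    rw [← one_div, le_div_iff₀ h1ε]
    nlinarith
  have ha_low : ε * ((1 - q)/2) ≤ a := by
    have h3 : ((D:ℝ)-1) * Real.log Z ≤ ((D:ℝ)-1) * (p*ε) :=
      mul_le_mul_of_nonneg_left hlogZ (by linarith)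
    have h4 : ((D:ℝ)-1)*(p*ε) = q*ε := by rw [hq]; ring
    have h5 : ε * (1 - ε) ≤ ε * (1+ε)⁻¹ := mul_le_mul_of_nonneg_left hinv (le_of_lt hε0)
    have h6 : ε * (1+ε)⁻¹ = ε/(1+ε) := by rw [div_eq_mul_inv]
    nlinarith
  have ha0 : 0 < a := lt_of_lt_of_le (by nlinarith) ha_low
  refine ⟨a/2, by linarith, ?_⟩
  intro V G _ _ hdeg _ ℙ hprob hBer v n hn
  haveI : DecidableEq ↥V := Classical.decEq _
  set nbs : ↥V → List ↥V := fun u => ((hdeg u).1.toFinset).toList with hnbs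
  have hn1 : ∀ u w, w ∈ nbs u ↔ G.Adj u w := by
    intro u w
    rw [hnbs]
    simp only [Finset.mem_toList, Set.Finite.mem_toFinset, SimpleGraph.mem_neighborSet]
  have hn2 : ∀ u, (nbs u).Nodup := fun u => Finset.nodup_toList _
  have hn3 : ∀ u, (nbs u).length ≤ D := by
    intro u
    rw [hnbs]
    rw [Finset.length_toList]
    rw [← Set.ncard_eq_toFinset_card (G.neighborSet u) (hdeg u).1]
    exact (hdeg u).2
  have hkey := ClusterDecay.measure_event_le (nbs := nbs) (v := v) hn1 hn2 hn3 hD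
    (p := p) (θ := θ) hp0 (le_of_lt hθ0) ℙ hBer n
  -- event abbreviation
  set E := {ω : G.edgeSet → Bool |
    (n : ℕ∞) ≤ ((openSubgraph G ω).connectedComponentMk v).supp.encard} with hE
  set N := (n : ℝ) with hN
  have hN1 : (1:ℝ) ≤ N := by rw [hN]; exact_mod_cast hn
  set m := (D-1)*(n-1) + D with hm
  have hc1 : (ENNReal.ofReal (Real.exp θ)) ^ (n-1)
      = ENNReal.ofReal (Real.exp (θ * (N - 1))) := by
    rw [← ENNReal.ofReal_pow (le_of_lt (Real.exp_pos θ)), ← Real.exp_nat_mul]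
    congr 1
    rw [Nat.cast_sub hn, hN]
    ring
  have hZm : (ENNReal.ofReal (p * Real.exp θ) + ENNReal.ofReal (1 - p)) ^ m
      = ENNReal.ofReal (Z ^ m) := by
    rw [← ENNReal.ofReal_add (by positivity) (by linarith), ← hZdef]
    exact (ENNReal.ofReal_pow hZpos.le _).symm
  have hMcast : ((m : ℕ) : ℝ) = ((D:ℝ)-1)*(N-1) + D := by
    rw [hm, Nat.cast_add, Nat.cast_mul, Nat.cast_sub (by omega : 1 ≤ D), Nat.cast_sub hn,
      Nat.cast_one, hN]
  have hreal : Z ^ m ≤ (2 * Real.exp (-N * (a/2))) * Real.exp (θ * (N - 1)) := by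
    have hlog2 : (0.6931471803:ℝ) < Real.log 2 := Real.log_two_gt_d9
    have hpε : p * ε ≤ ε := by nlinarith
    calc Z ^ m = Real.exp (Real.log Z) ^ m := by rw [Real.exp_log hZpos]
      _ = Real.exp ((m : ℝ) * Real.log Z) := (Real.exp_nat_mul _ _).symm
      _ ≤ Real.exp (Real.log 2 + (-N * (a/2)) + θ * (N - 1)) := by
          rw [Real.exp_le_exp, hMcast]
          nlinarith [mul_nonneg ha0.le (by linarith : (0:ℝ) ≤ N - 1)]
      _ = (2 * Real.exp (-N * (a/2))) * Real.exp (θ * (N - 1)) := by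
          rw [Real.exp_add, Real.exp_add, Real.exp_log (by norm_num : (0:ℝ) < 2)]
  have hc0 : (ENNReal.ofReal (Real.exp (θ * (N - 1)))) ≠ 0 :=
    ne_of_gt (ENNReal.ofReal_pos.mpr (Real.exp_pos _))
  have hctop : (ENNReal.ofReal (Real.exp (θ * (N - 1)))) ≠ ⊤ := ENNReal.ofReal_ne_top
  rw [← ENNReal.mul_le_mul_iff_left hc0 hctop]
  calc ℙ E * ENNReal.ofReal (Real.exp (θ * (N - 1)))
      = ℙ E * (ENNReal.ofReal (Real.exp θ)) ^ (n-1) := by rw [hc1]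
    _ ≤ (ENNReal.ofReal (p * Real.exp θ) + ENNReal.ofReal (1 - p)) ^ m := hkey
    _ = ENNReal.ofReal (Z ^ m) := hZm
    _ ≤ ENNReal.ofReal ((2 * Real.exp (-N * (a/2))) * Real.exp (θ * (N - 1))) :=
        ENNReal.ofReal_le_ofReal hreal
    _ = ENNReal.ofReal (2 * Real.exp (-N * (a/2))) * ENNReal.ofReal (Real.exp (θ * (N - 1))) :=
        ENNReal.ofReal_mul (by positivity)
end
end
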